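/- arXiv:1802.03035 — 5 statements merged into one kernel-verified Lean document; each statement's English description precedes it below -/
import Mathlib

section
/- Let S = k[x₁,…,xₙ], write S̄ = k[x₁,…,x_{n-1}], and decompose a monomial ideal I ⊆ S as I = I₀ ⊕ I₁xₙ ⊕ I₂xₙ² ⊕ ⋯ where each Iᵢ ⊆ S̄ is a monomial ideal. Let d be a degree sequence with ℘ = (x₁^{d₁},…,xₙ^{dₙ}). Then I is d-stable-plus-powers if and only if ℘ ⊆ I and m_{S̄}·Iᵢ ⊆ I_{i-1} for all 0 < i < dₙ, where m_{S̄} is the maximal homogeneous ideal of S̄. -/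
open MvPolynomial

/-- total degree of an exponent vector -/
def expDeg {n : ℕ} (m : Fin n →₀ ℕ) : ℕ := m.sum fun _ e => e

/-- `u >_lex v` for the lexicographic order with `x₁ > x₂ > ⋯ > xₙ`
(variables indexed so that `X 0` is the largest). -/
def LexGT {n : ℕ} (u v : Fin n →₀ ℕ) : Prop :=
  ∃ i : Fin n, v i < u i ∧ ∀ l : Fin n, l < i → u l = v l

/-- A monomial ideal: an ideal generated by monomials. -/
def IsMonomialIdeal {k : Type*} [Field k] {n : ℕ}
    (I : Ideal (MvPolynomial (Fin n) k)) : Prop :=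
  ∃ A : Set (Fin n →₀ ℕ), I = Ideal.span ((fun m => (monomial m (1 : k))) '' A)

/-- A lex ideal: a monomial ideal such that in each degree its monomials form an
initial lex segment. -/
def IsLexIdeal {k : Type*} [Field k] {n : ℕ}
    (I : Ideal (MvPolynomial (Fin n) k)) : Prop :=
  IsMonomialIdeal I ∧
    ∀ u v : Fin n →₀ ℕ, expDeg u = expDeg v → LexGT u v →
      monomial v (1 : k) ∈ I → monomial u (1 : k) ∈ I

/-- An `xₙ`-stable monomial ideal (in `n+1` variables `x₁,…,x_{n+1}`,
with `xₙ` interpreted as the last variable). -/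
def IsXnStable {k : Type*} [Field k] {n : ℕ}
    (I : Ideal (MvPolynomial (Fin (n + 1)) k)) : Prop :=
  IsMonomialIdeal I ∧
    ∀ u : Fin (n + 1) →₀ ℕ, monomial u (1 : k) ∈ I → 1 ≤ u (Fin.last n) →
      ∀ i : Fin (n + 1), i < Fin.last n →
        monomial (u + Finsupp.single i 1 - Finsupp.single (Fin.last n) 1) (1 : k) ∈ I

/-- A degree sequence: entries in `ℕ ∪ {∞}`, at least 1, weakly increasing. -/
def IsDegSeq {n : ℕ} (d : Fin n → ℕ∞) : Prop :=
  (∀ i, 1 ≤ d i) ∧ Monotone d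

/-- The ideal `(x₁^{d₁}, …, xₙ^{dₙ})`, where `xᵢ^∞ = 0` (so infinite entries
contribute nothing). -/
noncomputable def powersIdeal {n : ℕ} (k : Type*) [Field k] (d : Fin n → ℕ∞) :
    Ideal (MvPolynomial (Fin n) k) :=
  Ideal.span {f | ∃ (i : Fin n) (e : ℕ), d i = (e : ℕ∞) ∧
    f = monomial (Finsupp.single i e) (1 : k)}

/-- A `d`-lex-plus-powers ideal. -/
def IsLPP {k : Type*} [Field k] {n : ℕ} (d : Fin n → ℕ∞)
    (I : Ideal (MvPolynomial (Fin n) k)) : Prop :=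
  ∃ L, IsLexIdeal L ∧ I = L ⊔ powersIdeal k d

/-- A `d`-stable-plus-powers ideal. -/
def IsSPP {k : Type*} [Field k] {n : ℕ} (d : Fin (n + 1) → ℕ∞)
    (I : Ideal (MvPolynomial (Fin (n + 1)) k)) : Prop :=
  ∃ J, IsXnStable J ∧ I = J ⊔ powersIdeal k d

/-- Hilbert function of a (homogeneous) ideal: `HF(I; j) = dim_k [I]_j`. -/
noncomputable def hfI {k : Type*} [Field k] {n : ℕ}
    (I : Ideal (MvPolynomial (Fin n) k)) (j : ℕ) : ℕ :=
  Module.finrank k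
    ↥(I.restrictScalars k ⊓ homogeneousSubmodule (Fin n) k j)

/-- Hilbert function of the quotient: `HF(S/I; j) = dim_k [S/I]_j`. -/
noncomputable def hfQ {k : Type*} [Field k] {n : ℕ}
    (I : Ideal (MvPolynomial (Fin n) k)) (j : ℕ) : ℕ :=
  Module.finrank k
    (↥(homogeneousSubmodule (Fin n) k j) ⧸
      Submodule.comap (homogeneousSubmodule (Fin n) k j).subtype (I.restrictScalars k))

/-- An ideal is homogeneous iff it contains all homogeneous components of its
elements. -/
def IsHomogeneousIdeal {k : Type*} [Field k] {n : ℕ}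
    (I : Ideal (MvPolynomial (Fin n) k)) : Prop :=
  ∀ f ∈ I, ∀ j : ℕ, homogeneousComponent j f ∈ I

/-- The inclusion `S̄ = k[x₁,…,xₙ] → S = k[x₁,…,x_{n+1}]`. -/
noncomputable def inclHom (k : Type*) [Field k] (n : ℕ) :
    MvPolynomial (Fin n) k →+* MvPolynomial (Fin (n + 1)) k :=
  (MvPolynomial.rename (Fin.castSucc : Fin n → Fin (n + 1))).toRingHom

/-- The `i`-th slice `Iᵢ ⊆ S̄` in the decomposition `I = ⊕ᵢ Iᵢ xₙⁱ`
of a monomial ideal `I ⊆ S = S̄[xₙ]`, defined as `(I : xₙⁱ) ∩ S̄`. -/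
noncomputable def idealSlice {k : Type*} [Field k] {n : ℕ}
    (I : Ideal (MvPolynomial (Fin (n + 1)) k)) (i : ℕ) :
    Ideal (MvPolynomial (Fin n) k) :=
  Ideal.comap (inclHom k n)
    (Submodule.colon I (Ideal.span {(X (Fin.last n) : MvPolynomial (Fin (n + 1)) k) ^ i}))

/-- The maximal homogeneous ideal `(x₁,…,xₙ)` of a polynomial ring. -/
noncomputable def maxIdeal (k : Type*) [Field k] (n : ℕ) :
    Ideal (MvPolynomial (Fin n) k) :=
  Ideal.span (Set.range (X : Fin n → MvPolynomial (Fin n) k))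



section Aux


variable {k : Type*} [Field k] {n : ℕ}

/-- embed an exponent vector into one more variable -/
noncomputable def embExp {n : ℕ} (u : Fin n →₀ ℕ) : Fin (n + 1) →₀ ℕ :=
  u.mapDomain Fin.castSucc

lemma embExp_last (u : Fin n →₀ ℕ) : embExp u (Fin.last n) = 0 :=
  Finsupp.mapDomain_notin_range _ _ (by
    rintro ⟨j, hj⟩; exact (Fin.castSucc_lt_last j).ne hj)

lemma embExp_castSucc (u : Fin n →₀ ℕ) (j : Fin n) :
    embExp u (Fin.castSucc j) = u j :=
  Finsupp.mapDomain_apply (Fin.castSucc_injective n) _ _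

/-- remove the last variable from an exponent vector -/
noncomputable def resExp {n : ℕ} (a : Fin (n + 1) →₀ ℕ) : Fin n →₀ ℕ :=
  Finsupp.comapDomain Fin.castSucc a (Fin.castSucc_injective n).injOn

lemma embExp_resExp (a : Fin (n + 1) →₀ ℕ) :
    embExp (resExp a) + Finsupp.single (Fin.last n) (a (Fin.last n)) = a := by
  ext x
  induction x using Fin.lastCases with
  | last => simp [embExp_last]
  | cast j =>
      have h1 : embExp (resExp a) (Fin.castSucc j) = a (Fin.castSucc j) := by
        rw [embExp_castSucc]; rfl
      have h2 : Finsupp.single (Fin.last n) (a (Fin.last n)) (Fin.castSucc j) = 0 :=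
        Finsupp.single_eq_of_ne' (Fin.castSucc_lt_last j).ne'
      simp [h1, h2]

lemma monomial_mem_span_iff {σ : Type*} {A : Set (σ →₀ ℕ)} {u : σ →₀ ℕ} :
    monomial u (1 : k) ∈ Ideal.span ((fun m => monomial m (1 : k)) '' A) ↔
      ∃ a ∈ A, a ≤ u := by
  rw [mem_ideal_span_monomial_image]
  classical
  simp [support_monomial]

lemma mem_of_support_monomial_mem {σ : Type*} {I : Ideal (MvPolynomial σ k)}
    {f : MvPolynomial σ k} (h : ∀ u ∈ f.support, monomial u (1 : k) ∈ I) : f ∈ I := by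
  rw [← f.support_sum_monomial_coeff]
  refine Ideal.sum_mem _ fun u hu => ?_
  have : monomial u (f.coeff u) = C (f.coeff u) * monomial u (1 : k) := by
    rw [C_mul_monomial, mul_one]
  rw [this]
  exact Ideal.mul_mem_left _ _ (h u hu)

lemma mem_monomialIdeal_iff {I : Ideal (MvPolynomial (Fin n) k)}
    (hI : IsMonomialIdeal I) {f : MvPolynomial (Fin n) k} :
    f ∈ I ↔ ∀ u ∈ f.support, monomial u (1 : k) ∈ I := by
  constructor
  · obtain ⟨A, rfl⟩ := hI
    intro hf u hu
    rw [mem_ideal_span_monomial_image] at hf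
    obtain ⟨a, ha, hau⟩ := hf u hu
    exact monomial_mem_span_iff.2 ⟨a, ha, hau⟩
  · exact mem_of_support_monomial_mem

lemma mem_support_mul_monomial {σ : Type*} {f : MvPolynomial σ k} {m w : σ →₀ ℕ} :
    w ∈ (f * monomial m (1 : k)).support ↔ ∃ u ∈ f.support, u + m = w := by
  classical
  simp only [MvPolynomial.mem_support_iff, coeff_mul_monomial', mul_one]
  constructor
  · intro h
    split_ifs at h with hle
    · exact ⟨w - m, h, tsub_add_cancel_of_le hle⟩
    · exact absurd rfl h
  · rintro ⟨u, hu, rfl⟩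
    rwa [if_pos le_add_self, add_tsub_cancel_right]

lemma mem_idealSlice {I : Ideal (MvPolynomial (Fin (n + 1)) k)}
    {f : MvPolynomial (Fin n) k} {i : ℕ} :
    f ∈ idealSlice I i ↔ inclHom k n f * X (Fin.last n) ^ i ∈ I := by
  rw [idealSlice, Ideal.mem_comap, ← Ideal.submodule_span_eq,
    Submodule.mem_colon_span_singleton, smul_eq_mul]

lemma inclHom_mul_X_pow (f : MvPolynomial (Fin n) k) (i : ℕ) :
    inclHom k n f * X (Fin.last n) ^ i =
      rename Fin.castSucc f * monomial (Finsupp.single (Fin.last n) i) (1 : k) := by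
  rw [X_pow_eq_monomial]; rfl

lemma monomial_mem_idealSlice {I : Ideal (MvPolynomial (Fin (n + 1)) k)}
    {u : Fin n →₀ ℕ} {i : ℕ} :
    monomial u (1 : k) ∈ idealSlice I i ↔
      monomial (embExp u + Finsupp.single (Fin.last n) i) (1 : k) ∈ I := by
  rw [mem_idealSlice, inclHom_mul_X_pow, rename_monomial, monomial_mul, mul_one]
  rfl

lemma mem_idealSlice_iff_support {I : Ideal (MvPolynomial (Fin (n + 1)) k)}
    (hI : IsMonomialIdeal I) {f : MvPolynomial (Fin n) k} {i : ℕ} :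
    f ∈ idealSlice I i ↔ ∀ u ∈ f.support, monomial u (1 : k) ∈ idealSlice I i := by
  classical
  constructor
  · intro hf u hu
    rw [monomial_mem_idealSlice]
    rw [mem_idealSlice, inclHom_mul_X_pow] at hf
    refine (mem_monomialIdeal_iff hI).1 hf _ ?_
    refine mem_support_mul_monomial.2 ⟨embExp u, ?_, rfl⟩
    rw [support_rename_of_injective (Fin.castSucc_injective n)]
    exact Finset.mem_image_of_mem _ hu
  · intro h
    rw [mem_idealSlice, inclHom_mul_X_pow]
    apply mem_of_support_monomial_mem
    intro w hw
    obtain ⟨v, hv, rfl⟩ := mem_support_mul_monomial.1 hw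
    rw [support_rename_of_injective (Fin.castSucc_injective n)] at hv
    obtain ⟨u, hu, rfl⟩ := Finset.mem_image.1 hv
    exact monomial_mem_idealSlice.1 (h u hu)

lemma powersIdeal_eq {m : ℕ} (d : Fin m → ℕ∞) :
    powersIdeal k d = Ideal.span ((fun w => monomial w (1 : k)) ''
      {w | ∃ (i : Fin m) (e : ℕ), d i = (e : ℕ∞) ∧ w = Finsupp.single i e}) := by
  unfold powersIdeal
  congr 1
  ext f
  constructor
  · rintro ⟨i, e, hde, rfl⟩; exact ⟨_, ⟨i, e, hde, rfl⟩, rfl⟩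
  · rintro ⟨w, ⟨i, e, hde, rfl⟩, rfl⟩; exact ⟨i, e, hde, rfl⟩

lemma monomial_mem_powersIdeal {m : ℕ} {d : Fin m → ℕ∞} {w : Fin m →₀ ℕ} :
    monomial w (1 : k) ∈ powersIdeal k d ↔
      ∃ (i : Fin m) (e : ℕ), d i = (e : ℕ∞) ∧ Finsupp.single i e ≤ w := by
  rw [powersIdeal_eq, monomial_mem_span_iff]
  constructor
  · rintro ⟨a, ⟨i, e, h, rfl⟩, hle⟩; exact ⟨i, e, h, hle⟩
  · rintro ⟨i, e, h, hle⟩; exact ⟨_, ⟨i, e, h, rfl⟩, hle⟩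

lemma monomial_mem_sup {σ : Type*} {A : Set (σ →₀ ℕ)}
    {P : Ideal (MvPolynomial σ k)} {B : Set (σ →₀ ℕ)}
    (hP : P = Ideal.span ((fun m => monomial m (1 : k)) '' B)) {w : σ →₀ ℕ} :
    monomial w (1 : k) ∈ Ideal.span ((fun m => monomial m (1 : k)) '' A) ⊔ P ↔
      monomial w (1 : k) ∈ Ideal.span ((fun m => monomial m (1 : k)) '' A) ∨
        monomial w (1 : k) ∈ P := by
  subst hP
  rw [← Ideal.span_union, ← Set.image_union, monomial_mem_span_iff,
    monomial_mem_span_iff, monomial_mem_span_iff]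
  constructor
  · rintro ⟨a, ha | ha, hle⟩
    · exact Or.inl ⟨a, ha, hle⟩
    · exact Or.inr ⟨a, ha, hle⟩
  · rintro (⟨a, ha, hle⟩ | ⟨a, ha, hle⟩)
    · exact ⟨a, Or.inl ha, hle⟩
    · exact ⟨a, Or.inr ha, hle⟩

end Aux


section Key

variable {k : Type*} [Field k] {n : ℕ}

lemma forward_key {d : Fin (n + 1) → ℕ∞} {A : Set (Fin (n + 1) →₀ ℕ)}
    (hstab : IsXnStable (Ideal.span ((fun m => monomial m (1 : k)) '' A)))
    {u : Fin n →₀ ℕ} {i : ℕ} (hi0 : 0 < i) (hilt : (i : ℕ∞) < d (Fin.last n)) (j : Fin n)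
    (h : monomial (embExp u + Finsupp.single (Fin.last n) i) (1 : k)
        ∈ Ideal.span ((fun m => monomial m (1 : k)) '' A) ⊔ powersIdeal k d) :
    monomial (embExp u + Finsupp.single (Fin.castSucc j) 1
        + Finsupp.single (Fin.last n) (i - 1)) (1 : k)
      ∈ Ideal.span ((fun m => monomial m (1 : k)) '' A) ⊔ powersIdeal k d := by
  classical
  set w : Fin (n + 1) →₀ ℕ := embExp u + Finsupp.single (Fin.last n) i with hwdef
  have hwlast : w (Fin.last n) = i := by
    simp [hwdef, embExp_last]
  rcases (monomial_mem_sup (powersIdeal_eq d)).1 h with hJ | hP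
  · have hst := hstab.2 w hJ (by omega) (Fin.castSucc j) (Fin.castSucc_lt_last j)
    refine Ideal.mem_sup_left ?_
    have heq : w + Finsupp.single (Fin.castSucc j) 1 - Finsupp.single (Fin.last n) 1
        = embExp u + Finsupp.single (Fin.castSucc j) 1
          + Finsupp.single (Fin.last n) (i - 1) := by
      ext x
      rcases eq_or_ne x (Fin.last n) with rfl | hx
      · simp [hwdef, embExp_last, Finsupp.single_eq_of_ne (Fin.castSucc_lt_last j).ne]
      · simp [hwdef, Finsupp.single_eq_of_ne' (Ne.symm hx)]
    rwa [heq] at hst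
  · obtain ⟨l, e, hde, hle⟩ := monomial_mem_powersIdeal.1 hP
    rcases eq_or_ne l (Fin.last n) with rfl | hl
    · exfalso
      have hei : e ≤ i := by
        have := hle (Fin.last n)
        simpa [hwlast] using this
      have : d (Fin.last n) ≤ (i : ℕ∞) := hde ▸ Nat.cast_le.2 hei
      exact absurd hilt (not_lt.2 this)
    · refine Ideal.mem_sup_right (monomial_mem_powersIdeal.2 ⟨l, e, hde, ?_⟩)
      intro x
      rcases eq_or_ne x l with rfl | hx
      · have h1 := hle x
        have h2 : Finsupp.single (Fin.last n) i x = 0 := Finsupp.single_eq_of_ne' (Ne.symm hl)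
        simp only [hwdef, Finsupp.add_apply, h2, add_zero] at h1
        simp only [Finsupp.add_apply]
        omega
      · simp [Finsupp.single_eq_of_ne' (Ne.symm hx)]

end Key

/-- A monomial ideal `I ⊆ S = k[x₁,…,x_{n+1}]` is
`d`-stable-plus-powers if and only if `℘ = (x₁^{d₁},…,x_{n+1}^{d_{n+1}}) ⊆ I` and
`m_{S̄} · Iᵢ ⊆ I_{i-1}` for all `0 < i < d_{n+1}`, where `Iᵢ ⊆ S̄ = k[x₁,…,xₙ]`
are the components of the decomposition `I = ⊕ᵢ Iᵢ x_{n+1}ⁱ`. -/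
theorem isSPP_iff_slices
    {k : Type*} [Field k] {n : ℕ} (d : Fin (n + 1) → ℕ∞) (hd : IsDegSeq d)
    (I : Ideal (MvPolynomial (Fin (n + 1)) k)) (hI : IsMonomialIdeal I) :
    IsSPP d I ↔
      (powersIdeal k d ≤ I ∧
        ∀ i : ℕ, 0 < i → (i : ℕ∞) < d (Fin.last n) →
          maxIdeal k n * idealSlice I i ≤ idealSlice I (i - 1)) := by
  classical
  constructor
  · rintro ⟨J, hJstab, hIJ⟩
    obtain ⟨A, hA⟩ := hJstab.1
    refine ⟨hIJ ▸ le_sup_right, ?_⟩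
    intro i hi0 hilt
    have hstep : ∀ (j : Fin n) (f : MvPolynomial (Fin n) k),
        f ∈ idealSlice I i → X j * f ∈ idealSlice I (i - 1) := by
      intro j f hf
      rw [mem_idealSlice_iff_support hI] at hf ⊢
      intro w hw
      have hXj : (X j : MvPolynomial (Fin n) k) * f
          = f * monomial (Finsupp.single j 1) 1 := by
        rw [mul_comm, ← X_pow_eq_monomial, pow_one]
      rw [hXj] at hw
      obtain ⟨u, hu, rfl⟩ := mem_support_mul_monomial.1 hw
      have hu' := monomial_mem_idealSlice.1 (hf u hu)
      rw [monomial_mem_idealSlice]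
      have hemb : embExp (u + Finsupp.single j 1)
          = embExp u + Finsupp.single (Fin.castSucc j) 1 := by
        simp [embExp, Finsupp.mapDomain_add, Finsupp.mapDomain_single]
      rw [hemb, hIJ, hA]
      rw [hIJ, hA] at hu'
      exact forward_key (hA ▸ hJstab) hi0 hilt j hu'
    rw [Ideal.mul_le]
    intro r hr s hs
    rw [maxIdeal] at hr
    induction hr using Submodule.span_induction with
    | mem x hx => obtain ⟨j, rfl⟩ := hx; exact hstep j s hs
    | zero => rw [zero_mul]; exact Submodule.zero_mem _
    | add x y hx hy ihx ihy => rw [add_mul]; exact add_mem ihx ihy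
    | smul c x hx ih =>
        rw [smul_eq_mul, mul_assoc]
        exact Ideal.mul_mem_left _ _ ih
  · rintro ⟨hP, hSl⟩
    obtain ⟨AI, hAI⟩ := hI
    set A : Set (Fin (n + 1) →₀ ℕ) :=
      {w | monomial w (1 : k) ∈ I ∧ ((w (Fin.last n) : ℕ∞) < d (Fin.last n))} with hAdef
    refine ⟨Ideal.span ((fun m => monomial m (1 : k)) '' A), ⟨⟨A, rfl⟩, ?_⟩, ?_⟩
    · -- stability
      intro u hu h1 jj hjj
      obtain ⟨a, ⟨haI, halt⟩, hau⟩ := monomial_mem_span_iff.1 hu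
      have haul : a (Fin.last n) ≤ u (Fin.last n) := hau _
      have hjne : jj ≠ Fin.last n := ne_of_lt hjj
      rcases lt_or_eq_of_le haul with h2 | h2
      · refine monomial_mem_span_iff.2 ⟨a, ⟨haI, halt⟩, ?_⟩
        intro x
        have hax := hau x
        rcases eq_or_ne x (Fin.last n) with rfl | hx
        · have hs1 : Finsupp.single jj 1 (Fin.last n) = 0 := Finsupp.single_eq_of_ne' hjne
          simp only [Finsupp.tsub_apply, Finsupp.add_apply, hs1, add_zero,
            Finsupp.single_eq_same]
          omega
        · have hs1 : Finsupp.single (Fin.last n) 1 x = 0 :=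
            Finsupp.single_eq_of_ne' (Ne.symm hx)
          simp only [Finsupp.tsub_apply, Finsupp.add_apply, hs1, tsub_zero]
          omega
      · -- a last = u last =: i ≥ 1
        set i := a (Fin.last n) with hidef
        have hi1 : 1 ≤ i := by omega
        have hilt : (i : ℕ∞) < d (Fin.last n) := halt
        set j : Fin n := jj.castPred hjne with hjdef
        have hjc : Fin.castSucc j = jj := Fin.castSucc_castPred jj hjne
        have hresl : monomial (resExp a) (1 : k) ∈ idealSlice I i := by
          rw [monomial_mem_idealSlice, hidef, embExp_resExp]
          exact haI
        have hXmem : (X j : MvPolynomial (Fin n) k) * monomial (resExp a) 1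
            ∈ maxIdeal k n * idealSlice I i :=
          Ideal.mul_mem_mul (Ideal.subset_span ⟨j, rfl⟩) hresl
        have hsl := hSl i hi1 hilt hXmem
        have hXj : (X j : MvPolynomial (Fin n) k)
            = monomial (Finsupp.single j 1) 1 := by
          rw [← X_pow_eq_monomial, pow_one]
        have hXeq : (X j : MvPolynomial (Fin n) k) * monomial (resExp a) 1
            = monomial (resExp a + Finsupp.single j 1) 1 := by
          rw [hXj, monomial_mul, one_mul, add_comm]
        rw [hXeq] at hsl
        have ha' := monomial_mem_idealSlice.1 hsl
        have ha'A : (embExp (resExp a + Finsupp.single j 1)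
            + Finsupp.single (Fin.last n) (i - 1)) ∈ A := by
          rw [hAdef]
          refine ⟨ha', ?_⟩
          have hl : ((embExp (resExp a + Finsupp.single j 1)
              + Finsupp.single (Fin.last n) (i - 1) : Fin (n + 1) →₀ ℕ))
                (Fin.last n) = i - 1 := by
            simp [embExp_last]
          rw [hl]
          exact lt_trans (Nat.cast_lt.2 (by omega)) hilt
        refine monomial_mem_span_iff.2
          ⟨embExp (resExp a + Finsupp.single j 1) + Finsupp.single (Fin.last n) (i - 1),
            ha'A, ?_⟩
        · -- a' ≤ u + single jj 1 - single last 1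
          have hexp : embExp (resExp a + Finsupp.single j 1)
              = embExp (resExp a) + Finsupp.single jj 1 := by
            simp [embExp, Finsupp.mapDomain_add, Finsupp.mapDomain_single, hjc]
          have hadec := embExp_resExp a
          intro x
          have hax := hau x
          have hadecx := congrArg (fun f => f x) hadec
          simp only [Finsupp.add_apply] at hadecx
          rw [hexp]
          rcases eq_or_ne x (Fin.last n) with rfl | hx
          · have hs1 : Finsupp.single jj 1 (Fin.last n) = 0 :=
              Finsupp.single_eq_of_ne' hjne
            simp only [Finsupp.tsub_apply, Finsupp.add_apply, hs1, add_zero,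
              Finsupp.single_eq_same, embExp_last] at hadecx ⊢
            omega
          · have hs1 : Finsupp.single (Fin.last n) 1 x = 0 :=
              Finsupp.single_eq_of_ne' (Ne.symm hx)
            have hs2 : Finsupp.single (Fin.last n) (i - 1) x = 0 :=
              Finsupp.single_eq_of_ne' (Ne.symm hx)
            have hs3 : Finsupp.single (Fin.last n) (a (Fin.last n)) x = 0 :=
              Finsupp.single_eq_of_ne' (Ne.symm hx)
            rw [hs3, add_zero] at hadecx
            simp only [Finsupp.tsub_apply, Finsupp.add_apply, hs1, hs2, tsub_zero, add_zero]
            omega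
    · -- I = J ⊔ ℘
      refine le_antisymm ?_ (sup_le ?_ hP)
      · conv_lhs => rw [hAI]
        rw [Ideal.span_le]
        rintro f ⟨a, haAI, rfl⟩
        have haI : monomial a (1 : k) ∈ I := hAI ▸ Ideal.subset_span ⟨a, haAI, rfl⟩
        by_cases hcase : ((a (Fin.last n) : ℕ∞) < d (Fin.last n))
        · exact Ideal.mem_sup_left (monomial_mem_span_iff.2 ⟨a, ⟨haI, hcase⟩, le_rfl⟩)
        · push_neg at hcase
          have hne : d (Fin.last n) ≠ ⊤ :=
            ne_top_of_le_ne_top (WithTop.natCast_ne_top _) hcase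
          obtain ⟨e, he⟩ := WithTop.ne_top_iff_exists.1 hne
          have hea : e ≤ a (Fin.last n) := by
            rw [← he] at hcase
            exact Nat.cast_le.mp hcase
          refine Ideal.mem_sup_right
            (monomial_mem_powersIdeal.2 ⟨Fin.last n, e, he.symm, ?_⟩)
          intro x
          rcases eq_or_ne x (Fin.last n) with rfl | hx
          · simpa using hea
          · simp [Finsupp.single_eq_of_ne' (Ne.symm hx)]
      · rw [Ideal.span_le]
        rintro f ⟨a, ⟨haI, -⟩, rfl⟩
        exact haI
end

section
/- Let S = k[x₁,…,xₙ] and let I ⊆ S be a d-stable-plus-powers ideal for a degree sequence d. Then for all 0 ≤ i < dₙ, there is an isomorphism of S̄-modules ((I : xₙⁱ) + (xₙ))/(xₙ) ≅ Iᵢ, where Iᵢ ⊆ S̄ = k[x₁,…,x_{n-1}] is the i-th component in the decomposition I = ⊕_j Iⱼ xₙʲ. -/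
open MvPolynomial

/-- The projection `S = k[x₁,…,x_{n+1}] → S̄ = k[x₁,…,xₙ]` sending `x_{n+1} ↦ 0`
(realizing the isomorphism `S/(x_{n+1}) ≅ S̄`). -/
noncomputable def killXn (k : Type*) [Field k] (n : ℕ) :
    MvPolynomial (Fin (n + 1)) k →+* MvPolynomial (Fin n) k :=
  (MvPolynomial.aeval
    (Fin.lastCases (0 : MvPolynomial (Fin n) k) (fun i => MvPolynomial.X i))).toRingHom


lemma killXn_incl {k : Type*} [Field k] {n : ℕ} (p : MvPolynomial (Fin n) k) :
    killXn k n (inclHom k n p) = p := by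
  show aeval (Fin.lastCases (0 : MvPolynomial (Fin n) k) (fun i => X i))
      (rename Fin.castSucc p) = p
  rw [aeval_rename]
  have h : (Fin.lastCases (0 : MvPolynomial (Fin n) k) (fun i => X i)) ∘ Fin.castSucc
      = X := by
    funext i
    simp [Fin.lastCases_castSucc]
  rw [h, aeval_X_left_apply]

lemma coeff_incl_killXn {k : Type*} [Field k] {n : ℕ}
    (g : MvPolynomial (Fin (n + 1)) k) (u : Fin (n + 1) →₀ ℕ) :
    coeff u (inclHom k n (killXn k n g)) =
      if u (Fin.last n) = 0 then coeff u g else 0 := by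
  induction g using MvPolynomial.induction_on' with
  | add p q hp hq =>
    simp only [map_add, coeff_add, hp, hq]
    split_ifs <;> simp
  | monomial m c =>
    by_cases hm : m (Fin.last n) = 0
    · set m' : Fin n →₀ ℕ := Finsupp.equivFunOnFinite.symm (fun i => m (Fin.castSucc i))
        with hm'
      have hmm : Finsupp.mapDomain Fin.castSucc m' = m := by
        ext j
        induction j using Fin.lastCases with
        | last =>
          rw [Finsupp.mapDomain_notin_range, hm]
          rintro ⟨i, hi⟩
          exact absurd hi (Fin.castSucc_lt_last i).ne
        | cast i =>
          rw [Finsupp.mapDomain_apply (Fin.castSucc_injective n)]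
          rfl
      have h1 : (monomial m c : MvPolynomial (Fin (n+1)) k)
          = inclHom k n (monomial m' c) := by
        show _ = rename _ _
        rw [rename_monomial, hmm]
      rw [h1, killXn_incl, ← h1]
      by_cases hu : u (Fin.last n) = 0
      · rw [if_pos hu]
      · rw [if_neg hu, coeff_monomial, if_neg]
        rintro rfl
        exact hu hm
    · have h0 : killXn k n (monomial m c) = 0 := by
        show aeval (Fin.lastCases (0 : MvPolynomial (Fin n) k) (fun i => X i))
            (monomial m c) = 0
        rw [aeval_monomial, Finsupp.prod,
          Finset.prod_eq_zero (Finsupp.mem_support_iff.2 hm)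
            (by simp [zero_pow hm]), mul_zero]
      rw [h0, map_zero, coeff_zero]
      symm
      split_ifs with hu
      · rw [coeff_monomial, if_neg]
        rintro rfl
        exact hm hu
      · rfl

/-- If `I ⊆ S = k[x₁,…,x_{n+1}]` is a `d`-stable-plus-powers
ideal, then for `0 ≤ i < d_{n+1}` the `S̄`-module `((I : x_{n+1}ⁱ) + (x_{n+1}))/(x_{n+1})`
is (canonically isomorphic to) the component `Iᵢ ⊆ S̄`: under the canonical
isomorphism `S/(x_{n+1}) ≅ S̄`, the image of `(I : x_{n+1}ⁱ) + (x_{n+1})` equals `Iᵢ`. -/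
theorem slice_eq_image_colon
    {k : Type*} [Field k] {n : ℕ} (d : Fin (n + 1) → ℕ∞) (hd : IsDegSeq d)
    (I : Ideal (MvPolynomial (Fin (n + 1)) k)) (hI : IsSPP d I) :
    ∀ i : ℕ, (i : ℕ∞) < d (Fin.last n) →
      Ideal.map (killXn k n)
        (Submodule.colon I
            (Ideal.span {(MvPolynomial.X (Fin.last n) : MvPolynomial (Fin (n + 1)) k) ^ i}) ⊔
          Ideal.span {MvPolynomial.X (Fin.last n)}) =
      idealSlice I i := by
  intro i _
  obtain ⟨J, ⟨⟨A, hJA⟩, -⟩, rfl⟩ := hI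
  set G : Set (Fin (n + 1) →₀ ℕ) :=
    A ∪ {m | ∃ (j : Fin (n + 1)) (e : ℕ), d j = (e : ℕ∞) ∧ m = Finsupp.single j e} with hG
  have hpow : powersIdeal k d =
      Ideal.span ((fun m => (monomial m (1 : k))) ''
        {m | ∃ (j : Fin (n + 1)) (e : ℕ), d j = (e : ℕ∞) ∧ m = Finsupp.single j e}) := by
    unfold powersIdeal
    congr 1
    ext f
    constructor
    · rintro ⟨j, e, h1, rfl⟩
      exact ⟨_, ⟨j, e, h1, rfl⟩, rfl⟩
    · rintro ⟨m, ⟨j, e, h1, rfl⟩, rfl⟩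
      exact ⟨j, e, h1, rfl⟩
  have hIG : J ⊔ powersIdeal k d =
      Ideal.span ((fun m => (monomial m (1 : k))) '' G) := by
    rw [hG, Set.image_union, Ideal.span_union, hJA, hpow]
  apply le_antisymm
  · rw [Ideal.map_le_iff_le_comap]
    apply sup_le
    · intro g hg
      rw [Ideal.mem_comap]
      show killXn k n g ∈ idealSlice (J ⊔ powersIdeal k d) i
      rw [idealSlice, Ideal.mem_comap, ← Ideal.submodule_span_eq,
        Submodule.mem_colon_span_singleton, smul_eq_mul]
      rw [← Ideal.submodule_span_eq, Submodule.mem_colon_span_singleton, smul_eq_mul] at hg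
      rw [hIG, mem_ideal_span_monomial_image] at hg ⊢
      intro m hmsupp
      apply hg
      rw [mem_support_iff] at hmsupp ⊢
      rw [X_pow_eq_monomial, coeff_mul_monomial'] at hmsupp ⊢
      split_ifs at hmsupp ⊢ with hle
      · rw [coeff_incl_killXn] at hmsupp
        split_ifs at hmsupp with h0
        · exact hmsupp
        · simp at hmsupp
      · simp at hmsupp
    · intro g hg
      rw [Ideal.mem_span_singleton] at hg
      obtain ⟨p, rfl⟩ := hg
      rw [Ideal.mem_comap, map_mul]
      have h0 : killXn k n (X (Fin.last n)) = 0 := by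
        show aeval (Fin.lastCases (0 : MvPolynomial (Fin n) k) (fun i => X i))
            (X (Fin.last n)) = 0
        rw [aeval_X, Fin.lastCases_last]
      rw [h0, zero_mul]
      exact Submodule.zero_mem _
  · intro f hf
    have hf' : inclHom k n f ∈
        Submodule.colon (J ⊔ powersIdeal k d)
          (Ideal.span {(MvPolynomial.X (Fin.last n) : MvPolynomial (Fin (n + 1)) k) ^ i}) :=
      Ideal.mem_comap.mp hf
    have hfe : f = killXn k n (inclHom k n f) := (killXn_incl f).symm
    rw [hfe]
    exact Ideal.mem_map_of_mem _ (Submodule.mem_sup_left hf')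
end

section
/- Let S = k[x₁,…,xₙ] and let I ⊆ S be a d-lex-plus-powers ideal for a degree sequence d = (d₁,…,dₙ). Then each component Iᵢ ⊆ S̄ = k[x₁,…,x_{n-1}] in the decomposition I = ⊕_i Iᵢ xₙⁱ is a d̄-lex-plus-powers ideal, where d̄ = (d₁,…,d_{n-1}). -/
open MvPolynomial

namespace LPPAux

open Finsupp

variable {k : Type*} [Field k] {n : ℕ}

noncomputable def embed {n : ℕ} (m : Fin n →₀ ℕ) : Fin (n + 1) →₀ ℕ :=
  Finsupp.mapDomain Fin.castSucc m

lemma embed_castSucc (m : Fin n →₀ ℕ) (j : Fin n) : embed m (Fin.castSucc j) = m j :=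
  Finsupp.mapDomain_apply (Fin.castSucc_injective n) m j

lemma embed_last (m : Fin n →₀ ℕ) : embed m (Fin.last n) = 0 := by
  refine Finsupp.mapDomain_notin_range m _ ?_
  rintro ⟨j, hj⟩
  exact absurd hj (Fin.castSucc_lt_last j).ne

lemma embed_mono {m m' : Fin n →₀ ℕ} (h : m ≤ m') : embed m ≤ embed m' := by
  rw [Finsupp.le_def]
  intro l
  refine Fin.lastCases ?_ ?_ l
  · simp [embed_last]
  · intro j
    rw [embed_castSucc, embed_castSucc]
    exact Finsupp.le_def.mp h j

lemma expDeg_add (u v : Fin n →₀ ℕ) : expDeg (u + v) = expDeg u + expDeg v :=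
  Finsupp.sum_add_index' (fun _ => rfl) (fun _ _ _ => rfl)

lemma expDeg_embed (m : Fin n →₀ ℕ) : expDeg (embed m) = expDeg m :=
  Finsupp.sum_mapDomain_index (fun _ => rfl) (fun _ _ _ => rfl)

lemma expDeg_single (a : Fin n) (b : ℕ) : expDeg (Finsupp.single a b) = b :=
  Finsupp.sum_single_index rfl

lemma lexGT_embed {u v : Fin n →₀ ℕ} (h : LexGT u v) (i : ℕ) :
    LexGT (embed u + Finsupp.single (Fin.last n) i)
      (embed v + Finsupp.single (Fin.last n) i) := by
  obtain ⟨j, hlt, hagree⟩ := h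
  refine ⟨Fin.castSucc j, ?_, ?_⟩
  · rw [Finsupp.add_apply, Finsupp.add_apply, embed_castSucc, embed_castSucc,
      Finsupp.single_eq_of_ne' (Fin.castSucc_lt_last j).ne']
    simpa using hlt
  · intro l hl
    have hln : l ≠ Fin.last n := (hl.trans (Fin.castSucc_lt_last j)).ne
    obtain ⟨l', rfl⟩ := Fin.exists_castSucc_eq.mpr hln
    rw [Finsupp.add_apply, Finsupp.add_apply, embed_castSucc, embed_castSucc,
      hagree l' (Fin.castSucc_lt_castSucc_iff.mp hl)]

lemma support_mul_monomial {N : ℕ} (f : MvPolynomial (Fin N) k) (s : Fin N →₀ ℕ) :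
    (f * monomial s (1 : k)).support = f.support.map (addRightEmbedding s) :=
  AddMonoidAlgebra.support_coeff_mul_single f 1 (fun y => by simp) s

lemma mem_span_monomial_iff {N : ℕ} {A : Set (Fin N →₀ ℕ)} {u : Fin N →₀ ℕ} :
    monomial u (1 : k) ∈ Ideal.span ((fun m => monomial m (1 : k)) '' A) ↔
      ∃ a ∈ A, a ≤ u := by
  rw [mem_ideal_span_monomial_image]
  simp [support_monomial]

lemma powersIdeal_eq {N : ℕ} (d : Fin N → ℕ∞) :
    powersIdeal k d = Ideal.span ((fun m => monomial m (1 : k)) ''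
      {m | ∃ (j : Fin N) (e : ℕ), d j = (e : ℕ∞) ∧ m = Finsupp.single j e}) := by
  unfold powersIdeal
  congr 1
  ext f
  simp only [Set.mem_setOf_eq, Set.mem_image]
  constructor
  · rintro ⟨j, e, hde, rfl⟩; exact ⟨_, ⟨j, e, hde, rfl⟩, rfl⟩
  · rintro ⟨m, ⟨j, e, hde, rfl⟩, rfl⟩; exact ⟨j, e, hde, rfl⟩

lemma mem_slice_iff {A : Set (Fin (n + 1) →₀ ℕ)} (i : ℕ) (f : MvPolynomial (Fin n) k) :
    f ∈ idealSlice (Ideal.span ((fun m => monomial m (1 : k)) '' A)) i ↔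
      ∀ m ∈ f.support, ∃ a ∈ A, a ≤ embed m + Finsupp.single (Fin.last n) i := by
  classical
  rw [idealSlice, Ideal.mem_comap, Ideal.mem_colon_span_singleton]
  have hincl : (inclHom k n) f = rename Fin.castSucc f := rfl
  rw [hincl, X_pow_eq_monomial, mem_ideal_span_monomial_image, support_mul_monomial,
    support_rename_of_injective (Fin.castSucc_injective n)]
  constructor
  · intro h m hm
    exact h _ (Finset.mem_map.mpr ⟨_, Finset.mem_image.mpr ⟨m, hm, rfl⟩, rfl⟩)
  · intro h xi hxi
    obtain ⟨y, hy, rfl⟩ := Finset.mem_map.mp hxi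
    obtain ⟨m, hm, rfl⟩ := Finset.mem_image.mp hy
    exact h m hm

end LPPAux


/-- If `I ⊆ S = k[x₁,…,x_{n+1}]` is a `d`-lex-plus-powers ideal,
then each component `Iᵢ ⊆ S̄ = k[x₁,…,xₙ]` of the decomposition `I = ⊕ᵢ Iᵢ x_{n+1}ⁱ`
is a `d̄`-lex-plus-powers ideal, where `d̄ = (d₁,…,dₙ)`. -/
theorem isLPP_slice_of_isLPP
    {k : Type*} [Field k] {n : ℕ} (d : Fin (n + 1) → ℕ∞) (hd : IsDegSeq d)
    (I : Ideal (MvPolynomial (Fin (n + 1)) k)) (hI : IsLPP d I) :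
    ∀ i : ℕ, IsLPP (d ∘ Fin.castSucc) (idealSlice I i) := by
  
  intro i
  classical
  obtain ⟨L, ⟨⟨A, hA⟩, hlex⟩, hIL⟩ := hI
  set B : Set (Fin (n + 1) →₀ ℕ) :=
    {m | ∃ (j : Fin (n + 1)) (e : ℕ), d j = (e : ℕ∞) ∧ m = Finsupp.single j e} with hB
  have hI' : I = Ideal.span ((fun m => monomial m (1 : k)) '' (A ∪ B)) := by
    rw [hIL, hA, LPPAux.powersIdeal_eq, Set.image_union, Ideal.span_union]
  by_cases hc : ∃ e : ℕ, d (Fin.last n) = (e : ℕ∞) ∧ e ≤ i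
  · obtain ⟨e, hde, hei⟩ := hc
    have htop : idealSlice I i = ⊤ := by
      rw [Ideal.eq_top_iff_one, hI', LPPAux.mem_slice_iff]
      intro m hm
      refine ⟨Finsupp.single (Fin.last n) e, Or.inr ⟨_, e, hde, rfl⟩, ?_⟩
      rw [Finsupp.single_le_iff, Finsupp.add_apply, LPPAux.embed_last,
        Finsupp.single_eq_same]
      simpa using hei
    refine ⟨⊤, ⟨⟨Set.univ, ?_⟩, fun _ _ _ _ _ => trivial⟩, ?_⟩
    · symm
      rw [Ideal.eq_top_iff_one]
      exact Ideal.subset_span ⟨0, trivial, by simp⟩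
    · rw [htop, top_sup_eq]
  · push_neg at hc
    set TA : Set (Fin n →₀ ℕ) :=
      {m | ∃ a ∈ A, a ≤ LPPAux.embed m + Finsupp.single (Fin.last n) i} with hTA
    set Bb : Set (Fin n →₀ ℕ) :=
      {m | ∃ (j : Fin n) (e : ℕ), (d ∘ Fin.castSucc) j = (e : ℕ∞) ∧ m = Finsupp.single j e} with hBb
    have hslice : idealSlice I i =
        Ideal.span ((fun m => monomial m (1 : k)) '' (TA ∪ Bb)) := by
      ext f
      rw [hI', LPPAux.mem_slice_iff, mem_ideal_span_monomial_image]
      refine forall₂_congr fun m hm => ?_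
      constructor
      · rintro ⟨a, ha | hb, hle⟩
        · exact ⟨m, Or.inl ⟨a, ha, hle⟩, le_refl m⟩
        · obtain ⟨j, e, hde, rfl⟩ := hb
          by_cases hj : j = Fin.last n
          · subst hj
            exfalso
            have h1 := Finsupp.single_le_iff.mp hle
            rw [Finsupp.add_apply, LPPAux.embed_last, Finsupp.single_eq_same] at h1
            exact absurd (by simpa using h1) (not_le.mpr (hc e hde))
          · obtain ⟨j', rfl⟩ := Fin.exists_castSucc_eq.mpr hj
            refine ⟨Finsupp.single j' e, Or.inr ⟨j', e, hde, rfl⟩, ?_⟩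
            rw [Finsupp.single_le_iff]
            have h1 := Finsupp.single_le_iff.mp hle
            rw [Finsupp.add_apply, LPPAux.embed_castSucc,
              Finsupp.single_eq_of_ne' (Fin.castSucc_lt_last j').ne'] at h1
            simpa using h1
      · rintro ⟨t, ht | ht, hle⟩
        · obtain ⟨a, ha, hat⟩ := ht
          exact ⟨a, Or.inl ha,
            le_trans hat (add_le_add_left (LPPAux.embed_mono hle) _)⟩
        · obtain ⟨j', e, hde, rfl⟩ := ht
          refine ⟨Finsupp.single (Fin.castSucc j') e,
            Or.inr ⟨Fin.castSucc j', e, hde, rfl⟩, ?_⟩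
          rw [Finsupp.single_le_iff, Finsupp.add_apply, LPPAux.embed_castSucc]
          exact le_add_right (Finsupp.single_le_iff.mp hle)
    refine ⟨Ideal.span ((fun m => monomial m (1 : k)) '' TA), ⟨⟨TA, rfl⟩, ?_⟩, ?_⟩
    · intro u v huv hgt hv
      rw [LPPAux.mem_span_monomial_iff] at hv ⊢
      obtain ⟨t, ⟨a, ha, hat⟩, htv⟩ := hv
      have hvL : monomial (LPPAux.embed v + Finsupp.single (Fin.last n) i) (1 : k) ∈ L := by
        rw [hA, LPPAux.mem_span_monomial_iff]
        exact ⟨a, ha, le_trans hat (add_le_add_left (LPPAux.embed_mono htv) _)⟩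
      have hdeg : expDeg (LPPAux.embed u + Finsupp.single (Fin.last n) i) =
          expDeg (LPPAux.embed v + Finsupp.single (Fin.last n) i) := by
        rw [LPPAux.expDeg_add, LPPAux.expDeg_add, LPPAux.expDeg_embed,
          LPPAux.expDeg_embed, huv]
      have huL := hlex _ _ hdeg (LPPAux.lexGT_embed hgt i) hvL
      rw [hA, LPPAux.mem_span_monomial_iff] at huL
      exact ⟨u, huL, le_refl u⟩
    · rw [hslice, Set.image_union, Ideal.span_union, LPPAux.powersIdeal_eq]
end

section
/- Let S = k[x₁,…,xₙ], d a degree sequence with dₙ < ∞, and ℘ = (x₁^{d₁},…,xₙ^{dₙ}). Let I be a monomial ideal with ℘ ⊊ I ⊊ S and J = ℘ : I. Then I is a d-stable-plus-powers ideal if and only if J is a d-stable-plus-powers ideal. -/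
open MvPolynomial

section AuxSPP

variable {k : Type*} [Field k]

/-- Span of a set of monomials, as an ideal. -/
noncomputable abbrev mSpan (k : Type*) [Field k] {N : ℕ} (A : Set (Fin N →₀ ℕ)) :
    Ideal (MvPolynomial (Fin N) k) :=
  Ideal.span ((fun m => monomial m (1 : k)) '' A)

/-- A set of exponent vectors closed under divisibility upwards. -/
def UpClosed {N : ℕ} (A : Set (Fin N →₀ ℕ)) : Prop :=
  ∀ ⦃u v⦄, u ∈ A → u ≤ v → v ∈ A

lemma monomial_mem_mSpan_iff {N : ℕ} {A : Set (Fin N →₀ ℕ)} {u : Fin N →₀ ℕ} :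
    monomial u (1 : k) ∈ mSpan k A ↔ ∃ s ∈ A, s ≤ u := by
  rw [mem_ideal_span_monomial_image]
  constructor
  · intro h
    exact h u (by simp [support_monomial])
  · intro h m hm
    classical
    rw [support_monomial, if_neg (one_ne_zero)] at hm
    simp only [Finset.mem_singleton] at hm
    subst hm; exact h

lemma mem_mSpan_of_le {N : ℕ} {A : Set (Fin N →₀ ℕ)} {s u : Fin N →₀ ℕ}
    (hs : s ∈ A) (h : s ≤ u) : monomial u (1 : k) ∈ mSpan k A :=
  monomial_mem_mSpan_iff.mpr ⟨s, hs, h⟩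

lemma mem_mSpan_iff {N : ℕ} {A : Set (Fin N →₀ ℕ)} (hA : UpClosed A)
    {f : MvPolynomial (Fin N) k} :
    f ∈ mSpan k A ↔ ∀ m ∈ f.support, m ∈ A := by
  rw [mem_ideal_span_monomial_image]
  exact forall₂_congr fun m hm => ⟨fun ⟨s, hs, hle⟩ => hA hs hle, fun h => ⟨m, h, le_rfl⟩⟩

lemma upClosed_memSet {N : ℕ} (I : Ideal (MvPolynomial (Fin N) k)) :
    UpClosed {u | monomial u (1 : k) ∈ I} := by
  intro u v hu huv
  have h : monomial v (1 : k) = monomial (v - u) (1 : k) * monomial u (1 : k) := by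
    rw [monomial_mul, one_mul, tsub_add_cancel_of_le huv]
  show monomial v (1:k) ∈ I
  rw [h]
  exact Ideal.mul_mem_left _ _ hu

lemma monomial_ideal_eq_mSpan {N : ℕ} {I : Ideal (MvPolynomial (Fin N) k)}
    (hI : ∃ A : Set (Fin N →₀ ℕ), I = Ideal.span ((fun m => (monomial m (1 : k))) '' A)) :
    I = mSpan k {u | monomial u (1 : k) ∈ I} := by
  obtain ⟨A₀, hA₀⟩ := hI
  apply le_antisymm
  · conv_lhs => rw [hA₀]
    rw [Ideal.span_le]
    rintro _ ⟨u, hu, rfl⟩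
    refine Ideal.subset_span ⟨u, ?_, rfl⟩
    show monomial u (1:k) ∈ I
    rw [hA₀]; exact Ideal.subset_span ⟨u, hu, rfl⟩
  · rw [Ideal.span_le]
    rintro _ ⟨u, hu, rfl⟩
    exact hu

lemma monomial_mem_upclosed {N : ℕ} {A : Set (Fin N →₀ ℕ)} (hA : UpClosed A)
    {u : Fin N →₀ ℕ} :
    monomial u (1 : k) ∈ mSpan k A ↔ u ∈ A := by
  rw [monomial_mem_mSpan_iff]
  exact ⟨fun ⟨s, hs, hle⟩ => hA hs hle, fun h => ⟨u, h, le_rfl⟩⟩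

/-- The divisibility predicate for the pure-powers ideal. -/
def PP {N : ℕ} (E : Fin N → ℕ) (u : Fin N →₀ ℕ) : Prop := ∃ i, E i ≤ u i

/-- Generators of the pure-powers ideal, at exponent level. -/
def PG {N : ℕ} (E : Fin N → ℕ) : Set (Fin N →₀ ℕ) :=
  Set.range fun i => Finsupp.single i (E i)

lemma PP_mono {N : ℕ} {E : Fin N → ℕ} {u v : Fin N →₀ ℕ} (h : u ≤ v) :
    PP E u → PP E v := fun ⟨i, hi⟩ => ⟨i, hi.trans (Finsupp.le_def.mp h i)⟩

lemma powersIdeal_eq_span {N : ℕ} (d : Fin N → ℕ∞) (E : Fin N → ℕ)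
    (hE : ∀ i, d i = (E i : ℕ∞)) :
    powersIdeal k d = mSpan k (PG E) := by
  unfold powersIdeal
  congr 1
  ext f
  constructor
  · rintro ⟨i, e', hde, rfl⟩
    have h : e' = E i := by
      have h2 := (hE i).symm.trans hde
      exact_mod_cast h2.symm
    subst h
    exact ⟨Finsupp.single i (E i), ⟨i, rfl⟩, rfl⟩
  · rintro ⟨_, ⟨i, rfl⟩, rfl⟩
    exact ⟨i, E i, hE i, rfl⟩

lemma PG_le_iff {N : ℕ} {E : Fin N → ℕ} {u : Fin N →₀ ℕ} :
    (∃ s ∈ PG E, s ≤ u) ↔ PP E u := by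
  constructor
  · rintro ⟨_, ⟨i, rfl⟩, hle⟩
    exact ⟨i, Finsupp.single_le_iff.mp hle⟩
  · rintro ⟨i, hi⟩
    exact ⟨Finsupp.single i (E i), ⟨i, rfl⟩, Finsupp.single_le_iff.mpr hi⟩

lemma monomial_mem_PG {N : ℕ} {E : Fin N → ℕ} {u : Fin N →₀ ℕ} :
    monomial u (1 : k) ∈ mSpan k (PG E) ↔ PP E u :=
  monomial_mem_mSpan_iff.trans PG_le_iff

lemma mem_PG_iff {N : ℕ} {E : Fin N → ℕ} {f : MvPolynomial (Fin N) k} :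
    f ∈ mSpan k (PG E) ↔ ∀ m ∈ f.support, PP E m := by
  rw [mem_ideal_span_monomial_image]
  exact forall₂_congr fun m hm => PG_le_iff

/-- The exponent set of the colon ideal `℘ : I`. -/
def Bset {N : ℕ} (E : Fin N → ℕ) (A : Set (Fin N →₀ ℕ)) : Set (Fin N →₀ ℕ) :=
  {v | ∀ u ∈ A, PP E (u + v)}

lemma upClosed_Bset {N : ℕ} {E : Fin N → ℕ} {A : Set (Fin N →₀ ℕ)} :
    UpClosed (Bset E A) := by
  intro v v' hv hle u hu
  exact PP_mono (add_le_add le_rfl hle) (hv u hu)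

lemma PP_mem_Bset {N : ℕ} {E : Fin N → ℕ} {A : Set (Fin N →₀ ℕ)} {u : Fin N →₀ ℕ}
    (h : PP E u) : u ∈ Bset E A := fun w _ => PP_mono le_add_self h

lemma colon_eq_Bset {N : ℕ} (E : Fin N → ℕ) {A : Set (Fin N →₀ ℕ)} (hA : UpClosed A) :
    Submodule.colon (mSpan k (PG E)) (mSpan k A) = mSpan k (Bset E A) := by
  classical
  apply le_antisymm
  · intro r hr
    rw [mem_mSpan_iff upClosed_Bset]
    intro m hm u hu
    have h1 : monomial u (1 : k) ∈ mSpan k A := mem_mSpan_of_le hu le_rfl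
    have h2 := Submodule.mem_colon.mp hr _ h1
    rw [smul_eq_mul] at h2
    have h3 : (m + u) ∈ (r * monomial u (1:k)).support := by
      rw [mem_support_iff, coeff_mul_monomial, mul_one]
      exact mem_support_iff.mp hm
    have h4 := mem_PG_iff.mp h2 _ h3
    rwa [add_comm] at h4
  · rw [Ideal.span_le]
    rintro _ ⟨v, hv, rfl⟩
    rw [SetLike.mem_coe, Submodule.mem_colon]
    intro p hp
    rw [smul_eq_mul, mem_PG_iff]
    intro m hm
    have h1 := support_mul (monomial v (1:k)) p hm
    rw [Finset.mem_add] at h1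
    obtain ⟨a, ha, b, hb, rfl⟩ := h1
    rw [support_monomial, if_neg one_ne_zero, Finset.mem_singleton] at ha
    subst ha
    have hbA : b ∈ A := (mem_mSpan_iff hA).mp hp b hb
    have := hv b hbA
    rwa [add_comm] at this

end AuxSPP

section AuxSPP2

variable {k : Type*} [Field k] {n : ℕ}

lemma mSpan_union {N : ℕ} (A B : Set (Fin N →₀ ℕ)) :
    mSpan k (A ∪ B) = mSpan k A ⊔ mSpan k B := by
  unfold mSpan
  rw [Set.image_union, Ideal.span_union]

lemma shift_apply (u : Fin (n+1) →₀ ℕ) (i j : Fin (n+1)) :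
    (u + Finsupp.single i 1 - Finsupp.single (Fin.last n) 1 : Fin (n+1) →₀ ℕ) j
      = u j + (if i = j then 1 else 0) - (if Fin.last n = j then 1 else 0) := by
  classical
  rw [Finsupp.tsub_apply, Finsupp.add_apply, Finsupp.single_apply, Finsupp.single_apply]

lemma shift_last (u : Fin (n+1) →₀ ℕ) {i : Fin (n+1)} (hi : i ≠ Fin.last n) :
    (u + Finsupp.single i 1 - Finsupp.single (Fin.last n) 1 : Fin (n+1) →₀ ℕ) (Fin.last n)
      = u (Fin.last n) - 1 := by
  rw [shift_apply, if_neg hi, if_pos rfl]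
  omega

lemma shift_ne (u : Fin (n+1) →₀ ℕ) (i : Fin (n+1)) {j : Fin (n+1)} (hj : Fin.last n ≠ j) :
    (u + Finsupp.single i 1 - Finsupp.single (Fin.last n) 1 : Fin (n+1) →₀ ℕ) j
      = u j + (if i = j then 1 else 0) := by
  rw [shift_apply, if_neg hj, Nat.sub_zero]

/-- The exponent-level stability condition characterizing SPP ideals. -/
def DCond {n : ℕ} (E : Fin (n+1) → ℕ) (e : ℕ) (A : Set (Fin (n+1) →₀ ℕ)) : Prop :=
  ∀ u ∈ A, 1 ≤ u (Fin.last n) → u (Fin.last n) < e →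
    ∀ i : Fin (n+1), i < Fin.last n →
      u + Finsupp.single i 1 - Finsupp.single (Fin.last n) 1 ∈ A

lemma spp_char (d : Fin (n+1) → ℕ∞) (E : Fin (n+1) → ℕ) (e : ℕ)
    (hE : ∀ i, d i = (E i : ℕ∞)) (hEe : E (Fin.last n) = e)
    {A : Set (Fin (n+1) →₀ ℕ)} (hA : UpClosed A) (hPA : ∀ u, PP E u → u ∈ A) :
    IsSPP d (mSpan k A) ↔ DCond E e A := by
  classical
  constructor
  · rintro ⟨K, ⟨hKmon, hKstab⟩, hIK⟩
    intro u hu hu1 hue i hi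
    set AK : Set (Fin (n+1) →₀ ℕ) := {w | monomial w (1:k) ∈ K} with hAKdef
    have hAKup : UpClosed AK := upClosed_memSet K
    have hKspan : K = mSpan k AK := monomial_ideal_eq_mSpan hKmon
    have humem : monomial u (1:k) ∈ mSpan k (AK ∪ PG E) := by
      rw [mSpan_union, ← hKspan, ← powersIdeal_eq_span d E hE, ← hIK]
      exact (monomial_mem_upclosed hA).mpr hu
    obtain ⟨s, hs, hsu⟩ := monomial_mem_mSpan_iff.mp humem
    rcases hs with hs | hs
    · -- s is a monomial of K
      have huAK : u ∈ AK := hAKup hs hsu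
      have hst := hKstab u huAK hu1 i hi
      have hmem : monomial (u + Finsupp.single i 1 - Finsupp.single (Fin.last n) 1) (1:k)
          ∈ mSpan k A := by
        rw [hIK]
        exact Ideal.mem_sup_left hst
      exact (monomial_mem_upclosed hA).mp hmem
    · -- s is a power generator
      obtain ⟨j, rfl⟩ := hs
      have hj : E j ≤ u j := Finsupp.single_le_iff.mp hsu
      have hjne : Fin.last n ≠ j := by
        intro h
        rw [← h, hEe] at hj
        omega
      refine hPA _ ⟨j, ?_⟩
      rw [shift_ne u i hjne]
      split_ifs <;> omega
  · intro hD
    have hine0 : ∀ i : Fin (n+1), i < Fin.last n → i ≠ Fin.last n := fun i hi => Fin.ne_of_lt hi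
    refine ⟨mSpan k {u ∈ A | u (Fin.last n) < e}, ⟨⟨_, rfl⟩, ?_⟩, ?_⟩
    · -- stability
      intro w hw hw1 i hi
      obtain ⟨u, ⟨huA, hue⟩, huw⟩ := monomial_mem_mSpan_iff.mp hw
      by_cases h1 : 1 ≤ u (Fin.last n)
      · have hsh := hD u huA h1 hue i hi
        refine mem_mSpan_of_le (s := u + Finsupp.single i 1 - Finsupp.single (Fin.last n) 1)
          ⟨hsh, ?_⟩ ?_
        · rw [shift_last u (hine0 i hi)]
          omega
        · intro j
          by_cases hj : Fin.last n = j
          · subst hj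
            rw [shift_last u (hine0 i hi), shift_last w (hine0 i hi)]
            have hjl := Finsupp.le_def.mp huw (Fin.last n)
            omega
          · rw [shift_ne u i hj, shift_ne w i hj]
            have hjj := Finsupp.le_def.mp huw j
            split_ifs <;> omega
      · refine mem_mSpan_of_le (s := u) ⟨huA, hue⟩ ?_
        intro j
        by_cases hj : Fin.last n = j
        · subst hj
          rw [shift_last w (hine0 i hi)]
          omega
        · rw [shift_ne w i hj]
          have hjj := Finsupp.le_def.mp huw j
          split_ifs <;> omega
    · -- the decomposition I = K + ℘
      rw [powersIdeal_eq_span d E hE, ← mSpan_union]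
      apply le_antisymm
      · rw [Ideal.span_le]
        rintro _ ⟨u, hu, rfl⟩
        by_cases hcase : u (Fin.last n) < e
        · exact SetLike.mem_coe.mpr (mem_mSpan_of_le (Or.inl ⟨hu, hcase⟩) le_rfl)
        · refine SetLike.mem_coe.mpr (mem_mSpan_of_le
            (s := Finsupp.single (Fin.last n) (E (Fin.last n)))
            (Or.inr ⟨Fin.last n, rfl⟩) ?_)
          rw [Finsupp.single_le_iff, hEe]
          omega
      · rw [Ideal.span_le]
        rintro _ ⟨u, hu, rfl⟩
        refine SetLike.mem_coe.mpr (mem_mSpan_of_le ?_ le_rfl)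
        rcases hu with hu | hu
        · exact hu.1
        · exact hPA u (PG_le_iff.mp ⟨u, hu, le_rfl⟩)

lemma bset_bset {E : Fin (n+1) → ℕ} {A : Set (Fin (n+1) →₀ ℕ)}
    (hA : UpClosed A) (hPA : ∀ u, PP E u → u ∈ A) :
    Bset E (Bset E A) = A := by
  ext u
  constructor
  · intro hu
    by_contra huA
    have hnP : ∀ i, u i < E i := by
      intro i
      by_contra h
      exact huA (hPA u ⟨i, by omega⟩)
    set v : Fin (n+1) →₀ ℕ := Finsupp.equivFunOnFinite.symm (fun i => E i - 1 - u i) with hv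
    have hvapp : ∀ i, v i = E i - 1 - u i := fun i => rfl
    have hvB : v ∈ Bset E A := by
      intro w hw
      by_contra hc
      rw [PP] at hc
      push_neg at hc
      have hwu : w ≤ u := by
        intro j
        have h1 := hc j
        rw [Finsupp.add_apply, hvapp] at h1
        have h2 := hnP j
        omega
      exact huA (hA hw hwu)
    obtain ⟨i, hi⟩ := hu v hvB
    rw [Finsupp.add_apply, hvapp] at hi
    have h2 := hnP i
    omega
  · intro hu v hv
    have h := hv u hu
    rwa [add_comm u v] at h

lemma dcond_dual {E : Fin (n+1) → ℕ} {e : ℕ} (hEe : E (Fin.last n) = e)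
    {A : Set (Fin (n+1) →₀ ℕ)} (hD : DCond E e A) : DCond E e (Bset E A) := by
  intro v hv hv1 hve i hi
  intro u hu
  have hine : i ≠ Fin.last n := Fin.ne_of_lt hi
  by_cases hul : 1 ≤ u (Fin.last n)
  · by_cases hue : u (Fin.last n) < e
    · have hu' := hD u hu hul hue i hi
      have hPP := hv _ hu'
      have heq : (u + Finsupp.single i 1 - Finsupp.single (Fin.last n) 1) + v
          = u + (v + Finsupp.single i 1 - Finsupp.single (Fin.last n) 1) := by
        ext j
        rw [Finsupp.add_apply, Finsupp.add_apply]
        by_cases hj : Fin.last n = j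
        · subst hj
          rw [shift_last u hine, shift_last v hine]
          omega
        · rw [shift_ne u i hj, shift_ne v i hj]
          split_ifs <;> omega
      rwa [heq] at hPP
    · refine ⟨Fin.last n, ?_⟩
      rw [Finsupp.add_apply, shift_last v hine, hEe]
      omega
  · obtain ⟨j, hj⟩ := hv u hu
    rw [Finsupp.add_apply] at hj
    have hjne : Fin.last n ≠ j := by
      intro h
      rw [← h, hEe] at hj
      omega
    refine ⟨j, ?_⟩
    rw [Finsupp.add_apply, shift_ne v i hjne]
    split_ifs <;> omega

end AuxSPP2


/-- Let `d` be a degree sequence with `d_{n+1} < ∞`,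
`℘ = (x₁^{d₁},…,x_{n+1}^{d_{n+1}})`, `I` a monomial ideal with `℘ ⊊ I ⊊ S`, and
`J = ℘ : I`. Then `I` is `d`-stable-plus-powers iff `J` is `d`-stable-plus-powers. -/
theorem isSPP_iff_isSPP_link
    {k : Type*} [Field k] {n : ℕ} (d : Fin (n + 1) → ℕ∞) (hd : IsDegSeq d)
    (e : ℕ) (he : d (Fin.last n) = (e : ℕ∞))
    (I : Ideal (MvPolynomial (Fin (n + 1)) k)) (hI : IsMonomialIdeal I)
    (hlt : powersIdeal k d < I) (hne : I ≠ ⊤)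
    (J : Ideal (MvPolynomial (Fin (n + 1)) k))
    (hJ : J = Submodule.colon (powersIdeal k d) I) :
    IsSPP d I ↔ IsSPP d J := by
  
  classical
  have hfin : ∀ i, d i ≠ ⊤ := by
    intro i h
    have h2 := hd.2 (Fin.le_last i)
    rw [h, he, top_le_iff] at h2
    exact ENat.coe_ne_top e h2
  set E : Fin (n+1) → ℕ := fun i => (d i).toNat with hEdef
  have hE : ∀ i, d i = (E i : ℕ∞) := fun i => (ENat.coe_toNat (hfin i)).symm
  have hEe : E (Fin.last n) = e := by
    have h := (hE (Fin.last n)).symm.trans he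
    exact_mod_cast h
  set A : Set (Fin (n+1) →₀ ℕ) := {u | monomial u (1:k) ∈ I} with hAdef
  have hA : UpClosed A := upClosed_memSet I
  have hIA : I = mSpan k A := monomial_ideal_eq_mSpan hI
  have hPA : ∀ u, PP E u → u ∈ A := by
    intro u hu
    have hm : monomial u (1:k) ∈ powersIdeal k d := by
      rw [powersIdeal_eq_span d E hE]
      exact monomial_mem_PG.mpr hu
    exact hlt.le hm
  have hPB : ∀ u, PP E u → u ∈ Bset E A := fun u hu => PP_mem_Bset hu
  have hJB : J = mSpan k (Bset E A) := by
    rw [hJ, powersIdeal_eq_span d E hE, hIA, colon_eq_Bset E hA]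
  rw [hIA, hJB, spp_char d E e hE hEe hA hPA,
    spp_char d E e hE hEe upClosed_Bset hPB]
  constructor
  · exact dcond_dual hEe
  · intro hDB
    have h := dcond_dual hEe hDB
    rwa [bset_bset hA hPA] at h
end

section
/- Let S = k[x₁,…,xₙ] over an infinite field, let f₁,…,f_{n-1} be a homogeneous regular sequence of degrees d₁ ≤ ⋯ ≤ d_{n-1}, let ℓ be a general linear form, and let fₙ ∈ S be any homogeneous form of degree dₙ > Σ_{j=1}^{n-1}(d_j - 1) such that f₁,…,fₙ is a regular sequence. Then fₙ ∈ (f₁,…,f_{n-1}, ℓ); consequently there exists a form g of degree dₙ - 1 and a form fₙ' with fₙ' = ℓ·g modulo (f₁,…,f_{n-1}) such that f₁,…,f_{n-1},fₙ' is a regular sequence generating the same ideal (f₁,…,fₙ) modulo (f₁,…,f_{n-1}). -/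
open MvPolynomial

namespace LFFM

attribute [local instance] MvPolynomial.gradedAlgebra


attribute [local instance] MvPolynomial.gradedAlgebra

variable {K : Type*} [Field K] {N : ℕ}

lemma degEqSum (m : Fin N →₀ ℕ) : m.degree = ∑ t, m t :=
  Finset.sum_subset (Finset.subset_univ _)
    (fun t _ ht => Finsupp.notMem_support_iff.mp ht)

lemma decompose_coe (φ : MvPolynomial (Fin N) K) (i : ℕ) :
    (DirectSum.decompose (homogeneousSubmodule (Fin N) K) φ i
      : MvPolynomial (Fin N) K) = homogeneousComponent i φ :=
  MvPolynomial.decomposition.decompose'_apply φ i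

lemma comp_mem_span {S : Set (MvPolynomial (Fin N) K)}
    (hS : ∀ s ∈ S, ∃ e, MvPolynomial.IsHomogeneous s e)
    {p : MvPolynomial (Fin N) K} (hp : p ∈ Ideal.span S) (j : ℕ) :
    homogeneousComponent j p ∈ Ideal.span S := by
  have h := Ideal.homogeneous_span (homogeneousSubmodule (Fin N) K) S
    (fun x hx => by obtain ⟨e, he⟩ := hS x hx; exact ⟨e, he⟩)
  have := h j hp
  rwa [decompose_coe] at this

lemma comp_mul_of_le {g : MvPolynomial (Fin N) K} {e : ℕ}
    (hg : g.IsHomogeneous e) (b : MvPolynomial (Fin N) K) {j : ℕ} (h : e ≤ j) :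
    homogeneousComponent j (g * b) = g * homogeneousComponent (j - e) b := by
  have := DirectSum.coe_decompose_mul_of_left_mem_of_le
    (𝒜 := homogeneousSubmodule (Fin N) K) (b := b) hg h
  rwa [decompose_coe, decompose_coe] at this

lemma comp_mul_of_not_le {g : MvPolynomial (Fin N) K} {e : ℕ}
    (hg : g.IsHomogeneous e) (b : MvPolynomial (Fin N) K) {j : ℕ} (h : ¬ e ≤ j) :
    homogeneousComponent j (g * b) = 0 := by
  have := DirectSum.coe_decompose_mul_of_left_mem_of_not_le
    (𝒜 := homogeneousSubmodule (Fin N) K) (b := b) hg h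
  rwa [decompose_coe] at this




lemma finDegSet {j : ℕ} {P : (Fin N →₀ ℕ) → Prop}
    (hP : ∀ m, P m → m.degree = j) : Finite {m : Fin N →₀ ℕ // P m} := by
  apply Finite.of_injective
    (fun m => (fun t => (⟨m.1 t, by
      have h1 := Finsupp.le_degree t m.1
      have h2 := hP m.1 m.2
      omega⟩ : Fin (j+1)) : Fin N → Fin (j+1)))
  intro a b h
  exact Subtype.ext (Finsupp.ext fun t => congrArg Fin.val (congrFun h t))

noncomputable def eqv (j : ℕ) :
    (homogeneousSubmodule (Fin N) K j) ≃ₗ[K] ({d : Fin N →₀ ℕ | d.degree = j} →₀ K) :=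
  (LinearEquiv.ofEq _ _ (homogeneousSubmodule_eq_finsupp_supported (Fin N) K j)).trans
    (AddMonoidAlgebra.supportedEquivFinsupp _)

instance finSetDeg (j : ℕ) : Finite {d : Fin N →₀ ℕ | d.degree = j} :=
  finDegSet (P := fun m => m ∈ {d : Fin N →₀ ℕ | d.degree = j}) (fun _ h => h)

instance findimV (j : ℕ) : FiniteDimensional K (homogeneousSubmodule (Fin N) K j) := by
  have : Module.Finite K ({d : Fin N →₀ ℕ | d.degree = j} →₀ K) := by
    haveI := Fintype.ofFinite ({d : Fin N →₀ ℕ | d.degree = j} : Set _)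
    exact Module.Finite.equiv (Finsupp.linearEquivFunOnFinite K K _).symm
  exact Module.Finite.equiv (eqv (K := K) j).symm

lemma finrank_V (j : ℕ) :
    Module.finrank K (homogeneousSubmodule (Fin N) K j)
      = Nat.card {d : Fin N →₀ ℕ | d.degree = j} := by
  rw [LinearEquiv.finrank_eq (eqv (K := K) (N := N) j)]
  haveI := Fintype.ofFinite ({d : Fin N →₀ ℕ | d.degree = j} : Set _)
  rw [Module.finrank_finsupp_self, Nat.card_eq_fintype_card]




lemma sum_split (m : Fin N →₀ ℕ) (i' : Fin N) :
    m.degree = m i' + ∑ t ∈ Finset.univ.erase i', m t := by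
  rw [degEqSum, ← Finset.add_sum_erase _ _ (Finset.mem_univ i')]

lemma deg_add_single (m : Fin N →₀ ℕ) (i' : Fin N) (e : ℕ) :
    (m + Finsupp.single i' e).degree = m.degree + e := by
  rw [sum_split (m + Finsupp.single i' e) i', sum_split m i']
  have h2 : ∑ t ∈ Finset.univ.erase i', (m + Finsupp.single i' e) t
      = ∑ t ∈ Finset.univ.erase i', m t :=
    Finset.sum_congr rfl (fun t ht => by
      rw [Finsupp.add_apply, Finsupp.single_eq_of_ne'
        (Ne.symm (Finset.ne_of_mem_erase ht)), add_zero])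
  rw [h2, Finsupp.add_apply, Finsupp.single_eq_same]
  omega

lemma deg_sub_single (m : Fin N →₀ ℕ) (i' : Fin N) (e : ℕ) (h : e ≤ m i') :
    (m - Finsupp.single i' e).degree + e = m.degree := by
  rw [sum_split (m - Finsupp.single i' e) i', sum_split m i']
  have h2 : ∑ t ∈ Finset.univ.erase i', (m - Finsupp.single i' e) t
      = ∑ t ∈ Finset.univ.erase i', m t :=
    Finset.sum_congr rfl (fun t ht => by
      rw [Finsupp.tsub_apply, Finsupp.single_eq_of_ne'
        (Ne.symm (Finset.ne_of_mem_erase ht)), Nat.sub_zero])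
  rw [h2, Finsupp.tsub_apply, Finsupp.single_eq_same]
  omega

/-- number of monomials of degree `j` whose exponents at the first `i`
coordinates are bounded by `E`. -/
noncomputable def cnt (E : Fin N → ℕ) (i j : ℕ) : ℕ :=
  Nat.card {m : Fin N →₀ ℕ // m.degree = j ∧ ∀ t : Fin N, (t : ℕ) < i → m t < E t}

lemma cnt_zero (E : Fin N → ℕ) (j : ℕ) :
    cnt E 0 j = Nat.card {d : Fin N →₀ ℕ // d.degree = j} :=
  Nat.card_congr (Equiv.subtypeEquivRight (fun m =>
    ⟨fun h => h.1, fun h => ⟨h, fun t ht => by omega⟩⟩))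

lemma cnt_last (E : Fin N → ℕ) {D : ℕ} (hD : ∑ t, (E t - 1) < D) :
    cnt E N D = 0 := by
  have : IsEmpty {m : Fin N →₀ ℕ // m.degree = D ∧ ∀ t : Fin N, (t : ℕ) < N → m t < E t} := by
    constructor
    rintro ⟨m, hdeg, hlt⟩
    have h1 : ∀ t : Fin N, m t ≤ E t - 1 := fun t => by
      have := hlt t t.isLt; omega
    have h2 : m.degree ≤ ∑ t, (E t - 1) := by
      rw [degEqSum]; exact Finset.sum_le_sum (fun t _ => h1 t)
    omega
  exact Nat.card_of_isEmpty

lemma cnt_lt (E : Fin N → ℕ) {i j : ℕ} (hi : i < N) (hj : j < E ⟨i, hi⟩) :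
    cnt E (i + 1) j = cnt E i j := by
  apply Nat.card_congr
  apply Equiv.subtypeEquivRight
  intro m
  constructor
  · rintro ⟨hdeg, hlt⟩; exact ⟨hdeg, fun t ht => hlt t (by omega)⟩
  · rintro ⟨hdeg, hlt⟩
    refine ⟨hdeg, fun t ht => ?_⟩
    rcases Nat.lt_or_ge (t : ℕ) i with h' | h'
    · exact hlt t h'
    · have hv : (t : ℕ) = i := by omega
      have ht' : t = ⟨i, hi⟩ := Fin.ext hv
      have h3 : m t ≤ m.degree := Finsupp.le_degree t m
      have h4 : E t = E ⟨i, hi⟩ := by rw [ht']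
      omega

lemma cnt_rec (E : Fin N → ℕ) {i j : ℕ} (hi : i < N) (hj : E ⟨i, hi⟩ ≤ j) :
    cnt E (i + 1) j + cnt E i (j - E ⟨i, hi⟩) = cnt E i j := by
  set P : (Fin N →₀ ℕ) → Prop :=
    fun m => m.degree = j ∧ ∀ t : Fin N, (t : ℕ) < i → m t < E t with hP
  set i' : Fin N := ⟨i, hi⟩ with hi'
  set e : ℕ := E i' with he
  have hival : (i' : ℕ) = i := rfl
  haveI hfin : Finite {m : Fin N →₀ ℕ // P m} := finDegSet (fun m hm => hm.1)
  set Q : {m : Fin N →₀ ℕ // P m} → Prop := fun m => m.1 i' < e with hQ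
  have step1 : Nat.card {m : Fin N →₀ ℕ // P m}
      = Nat.card {a // Q a} + Nat.card {a // ¬ Q a} := by
    rw [← Nat.card_sum]
    exact Nat.card_congr (Equiv.sumCompl Q).symm
  have e1 : {a // Q a} ≃ {m : Fin N →₀ ℕ // P m ∧ m i' < e} :=
    Equiv.subtypeSubtypeEquivSubtypeInter P (fun m => m i' < e)
  have e1' : {m : Fin N →₀ ℕ // P m ∧ m i' < e} ≃ {m : Fin N →₀ ℕ |
      m.degree = j ∧ ∀ t : Fin N, (t : ℕ) < i + 1 → m t < E t} :=
    Equiv.subtypeEquivRight (fun m => by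
      constructor
      · rintro ⟨⟨hdeg, hlt⟩, hq⟩
        refine ⟨hdeg, fun t ht => ?_⟩
        rcases Nat.lt_or_ge (t : ℕ) i with h' | h'
        · exact hlt t h'
        · have hv : (t : ℕ) = i := by omega
          have ht' : t = i' := Fin.ext hv
          rw [ht']; exact hq
      · rintro ⟨hdeg, hlt⟩
        exact ⟨⟨hdeg, fun t ht => hlt t (by omega)⟩, hlt i' (by omega)⟩)
  have e2 : {a // ¬ Q a} ≃ {m : Fin N →₀ ℕ //
      m.degree = j - e ∧ ∀ t : Fin N, (t : ℕ) < i → m t < E t} := by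
    refine ⟨fun a => ⟨a.1.1 - Finsupp.single i' e, ?_, ?_⟩,
      fun m => ⟨⟨m.1 + Finsupp.single i' e, ?_, ?_⟩, ?_⟩, ?_, ?_⟩
    · have hce : e ≤ a.1.1 i' := by
        have h0 := a.2
        simp only [hQ, not_lt] at h0
        exact h0
      have := deg_sub_single a.1.1 i' e hce
      have hdeg := a.1.2.1
      omega
    · intro t ht
      have := a.1.2.2 t ht
      rw [Finsupp.tsub_apply]
      omega
    · have := deg_add_single m.1 i' e
      have hdeg := m.2.1
      omega
    · intro t ht
      have hne : i' ≠ t := by intro h; rw [← h, hival] at ht; omega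
      rw [Finsupp.add_apply, Finsupp.single_eq_of_ne' hne, add_zero]
      exact m.2.2 t ht
    · show ¬ ((m.1 + Finsupp.single i' e) i' < e)
      rw [Finsupp.add_apply, Finsupp.single_eq_same]
      omega
    · rintro ⟨⟨a, ha⟩, hq⟩
      have hce : e ≤ a i' := by
        simp only [hQ, not_lt] at hq
        exact hq
      refine Subtype.ext (Subtype.ext (Finsupp.ext fun t => ?_))
      rcases eq_or_ne t i' with h | h
      · subst h
        simp only [Finsupp.add_apply, Finsupp.tsub_apply, Finsupp.single_eq_same]
        omega
      · simp only [Finsupp.add_apply, Finsupp.tsub_apply,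
          Finsupp.single_eq_of_ne' (Ne.symm h)]
        omega
    · rintro ⟨m, hm⟩
      refine Subtype.ext (Finsupp.ext fun t => ?_)
      rcases eq_or_ne t i' with h | h
      · subst h
        simp only [Finsupp.add_apply, Finsupp.tsub_apply, Finsupp.single_eq_same]
        omega
      · simp only [Finsupp.add_apply, Finsupp.tsub_apply,
          Finsupp.single_eq_of_ne' (Ne.symm h)]
        omega
  have c1 : cnt E (i + 1) j = Nat.card {a // Q a} :=
    (Nat.card_congr (e1.trans e1')).symm
  have c2 : cnt E i (j - e) = Nat.card {a // ¬ Q a} := (Nat.card_congr e2).symm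
  rw [c1, c2, ← step1]
  rfl


lemma high_degree_mem
    (G : Fin N → MvPolynomial (Fin N) K) (E : Fin N → ℕ)
    (hhom : ∀ i, (G i).IsHomogeneous (E i))
    (hG0 : ∀ i, G i ≠ 0)
    (hreg : ∀ i : Fin N, ∀ x, G i * x ∈ Ideal.span (G '' {t : Fin N | (t : ℕ) < (i : ℕ)}) →
      x ∈ Ideal.span (G '' {t : Fin N | (t : ℕ) < (i : ℕ)}))
    {p : MvPolynomial (Fin N) K} {D : ℕ} (hp : p.IsHomogeneous D)
    (hD : ∑ t, (E t - 1) < D) :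
    p ∈ Ideal.span (Set.range G) := by
  classical
  let J : ℕ → Ideal (MvPolynomial (Fin N) K) :=
    fun i => Ideal.span (G '' {t : Fin N | (t : ℕ) < i})
  let V : ℕ → Submodule K (MvPolynomial (Fin N) K) :=
    fun j => homogeneousSubmodule (Fin N) K j
  let W : ℕ → ℕ → Submodule K (MvPolynomial (Fin N) K) :=
    fun i j => (J i).restrictScalars K ⊓ V j
  have hSH : ∀ i : ℕ, ∀ s ∈ G '' {t : Fin N | (t : ℕ) < i},
      ∃ e, MvPolynomial.IsHomogeneous s e := by
    rintro i s ⟨t, _, rfl⟩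
    exact ⟨E t, hhom t⟩
  have hJmono : ∀ i : ℕ, J i ≤ J (i + 1) := fun i =>
    Ideal.span_mono (Set.image_mono (fun t ht => by
      simp only [Set.mem_setOf_eq] at *; omega))
  have main_ind : ∀ i : ℕ, i ≤ N → ∀ j : ℕ,
      Module.finrank K (W i j) + cnt E i j = Module.finrank K (V j) := by
    intro i
    induction i with
    | zero =>
      intro _ j
      have hempty : {t : Fin N | (t : ℕ) < 0} = ∅ := by ext t; simp
      have hJ0 : J 0 = ⊥ := by
        show Ideal.span (G '' {t : Fin N | (t : ℕ) < 0}) = ⊥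
        rw [hempty, Set.image_empty, Ideal.span_empty]
      have hW0 : W 0 j = ⊥ := by
        show (J 0).restrictScalars K ⊓ V j = ⊥
        rw [hJ0]
        simp
      rw [hW0, finrank_bot, cnt_zero, zero_add, finrank_V]
      exact (Nat.card_congr (Equiv.subtypeEquivRight (fun _ => Iff.rfl))).symm
    | succ i ih =>
      intro hle j
      have hi : i < N := hle
      have IH := ih (Nat.le_of_lt hi)
      set i' : Fin N := ⟨i, hi⟩ with hi'
      set g := G i' with hg
      set e := E i' with he
      have hJsucc : J (i + 1) = J i ⊔ Ideal.span {g} := by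
        have hins : {t : Fin N | (t : ℕ) < i + 1} = insert i' {t : Fin N | (t : ℕ) < i} := by
          ext t
          simp only [Set.mem_setOf_eq, Set.mem_insert_iff, Fin.ext_iff]
          constructor
          · intro h
            rcases Nat.lt_or_ge (t : ℕ) i with h' | h'
            · exact Or.inr h'
            · exact Or.inl (by show (t : ℕ) = i; omega)
          · rintro (h | h)
            · have : (t : ℕ) = i := h
              omega
            · omega
        show Ideal.span (G '' {t : Fin N | (t : ℕ) < i + 1}) = _
        rw [hins, Set.image_insert_eq, Ideal.span_insert, sup_comm]
      have hWmono : W i j ≤ W (i + 1) j :=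
        inf_le_inf_right _ (fun x hx => hJmono i hx)
      rcases le_or_gt e j with hej | hje
      · -- e ≤ j : the递 recursion case
        set μ : MvPolynomial (Fin N) K →ₗ[K] MvPolynomial (Fin N) K :=
          LinearMap.mulLeft K g with hμdef
        have hμ : ∀ b, μ b = g * b := fun b => rfl
        have hμinj : Function.Injective μ := by
          intro a b hab
          have h1 : g * a = g * b := hab
          exact mul_left_cancel₀ (hG0 i') h1
        have hmulV : ∀ b ∈ V (j - e), g * b ∈ V j := by
          intro b hb
          have h1 := (hhom i').mul (hb : MvPolynomial.IsHomogeneous b (j - e))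
          have h2 : e + (j - e) = j := by omega
          rw [h2] at h1
          exact h1
        have hB'le : Submodule.map μ (V (j - e)) ≤ W (i + 1) j := by
          rintro x ⟨b, hb, rfl⟩
          refine Submodule.mem_inf.mpr ⟨?_, hmulV b hb⟩
          show g * b ∈ J (i + 1)
          rw [hJsucc]
          exact Submodule.mem_sup_right (Ideal.mem_span_singleton.mpr ⟨b, rfl⟩)
        have E1 : W (i + 1) j = W i j ⊔ Submodule.map μ (V (j - e)) := by
          apply le_antisymm
          · intro x hx
            obtain ⟨hxI, hxV⟩ := Submodule.mem_inf.mp hx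
            have hxI' : x ∈ J i ⊔ Ideal.span {g} := by
              rw [← hJsucc]; exact hxI
            obtain ⟨a, ha, b, hb, rfl⟩ := Submodule.mem_sup.mp hxI'
            obtain ⟨c, rfl⟩ := Ideal.mem_span_singleton.mp hb
            have hxj : homogeneousComponent j (a + g * c) = a + g * c := by
              rw [homogeneousComponent_of_mem hxV, if_pos rfl]
            have hcomp : homogeneousComponent j (a + g * c)
                = homogeneousComponent j a + g * homogeneousComponent (j - e) c := by
              rw [map_add, comp_mul_of_le (hhom i') c hej]
            apply Submodule.mem_sup.mpr
            refine ⟨homogeneousComponent j a, ?_, g * homogeneousComponent (j - e) c, ?_, ?_⟩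
            · exact Submodule.mem_inf.mpr
                ⟨comp_mem_span (hSH i) ha j, homogeneousComponent_mem j a⟩
            · exact ⟨homogeneousComponent (j - e) c, homogeneousComponent_mem _ c, rfl⟩
            · rw [← hcomp, hxj]
          · exact sup_le hWmono hB'le
        have E2 : (W i j) ⊓ Submodule.map μ (V (j - e))
            = Submodule.map μ (W i (j - e)) := by
          apply le_antisymm
          · intro x hx
            obtain ⟨b, hb, rfl⟩ := hx.2
            have hbJ : b ∈ J i := hreg i' b hx.1.1
            exact ⟨b, Submodule.mem_inf.mpr ⟨hbJ, hb⟩, rfl⟩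
          · rintro _ ⟨b, hb, rfl⟩
            obtain ⟨hbJ, hbV⟩ := Submodule.mem_inf.mp hb
            refine Submodule.mem_inf.mpr ⟨Submodule.mem_inf.mpr ⟨?_, ?_⟩, ⟨b, hbV, rfl⟩⟩
            · exact Ideal.mul_mem_left _ g hbJ
            · exact hmulV b hbV
        haveI f1 : FiniteDimensional K (W i j) :=
          Submodule.finiteDimensional_of_le (inf_le_right : W i j ≤ V j)
        haveI f2 : FiniteDimensional K (Submodule.map μ (V (j - e))) :=
          Submodule.finiteDimensional_of_le
            (le_trans hB'le (inf_le_right : W (i + 1) j ≤ V j))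
        have dim1 : Module.finrank K (Submodule.map μ (V (j - e)))
            = Module.finrank K (V (j - e)) :=
          (LinearEquiv.finrank_eq (Submodule.equivMapOfInjective μ hμinj (V (j - e)))).symm
        have dim2 : Module.finrank K ((W i j) ⊓ Submodule.map μ (V (j - e)) : Submodule K _)
            = Module.finrank K (W i (j - e)) := by
          rw [E2]
          exact (LinearEquiv.finrank_eq
            (Submodule.equivMapOfInjective μ hμinj (W i (j - e)))).symm
        have sup_eq := Submodule.finrank_sup_add_finrank_inf_eq
          (W i j) (Submodule.map μ (V (j - e)))
        have h_alg : Module.finrank K (W (i + 1) j) + Module.finrank K (W i (j - e))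
            = Module.finrank K (W i j) + Module.finrank K (V (j - e)) := by
          rw [E1, ← dim1, ← dim2]
          omega
        have h_cnt := cnt_rec E hi hej
        rw [show E (⟨i, hi⟩ : Fin N) = e from rfl] at h_cnt
        have IHj := IH j
        have IHje := IH (j - e)
        omega
      · -- j < e : nothing changes in degree j
        have hW : W (i + 1) j = W i j := by
          apply le_antisymm
          · intro x hx
            obtain ⟨hxI, hxV⟩ := Submodule.mem_inf.mp hx
            have hxI' : x ∈ J i ⊔ Ideal.span {g} := by
              rw [← hJsucc]; exact hxI
            obtain ⟨a, ha, b, hb, rfl⟩ := Submodule.mem_sup.mp hxI'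
            obtain ⟨c, rfl⟩ := Ideal.mem_span_singleton.mp hb
            have hxj : homogeneousComponent j (a + g * c) = a + g * c := by
              rw [homogeneousComponent_of_mem hxV, if_pos rfl]
            have hcomp : homogeneousComponent j (a + g * c)
                = homogeneousComponent j a := by
              rw [map_add, comp_mul_of_not_le (hhom i') c (by omega), add_zero]
            refine Submodule.mem_inf.mpr ⟨?_, hxV⟩
            show a + g * c ∈ J i
            rw [← hxj, hcomp]
            exact comp_mem_span (hSH i) ha j
          · exact hWmono
        rw [hW, cnt_lt E hi hje]
        exact IH j
  have final := main_ind N le_rfl D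
  have hcnt0 : cnt E N D = 0 := cnt_last E hD
  haveI : FiniteDimensional K (V D) := findimV D
  have hWV : W N D = V D := by
    apply Submodule.eq_of_le_of_finrank_le (inf_le_right : W N D ≤ V D)
    have h0 : Module.finrank K (W N D) = Module.finrank K (V D) := by omega
    exact le_of_eq h0.symm
  have hpV : p ∈ V D := hp
  have hpW : p ∈ W N D := hWV ▸ hpV
  have hJN : J N = Ideal.span (Set.range G) := by
    show Ideal.span (G '' {t : Fin N | (t : ℕ) < N}) = _
    have : {t : Fin N | (t : ℕ) < N} = Set.univ := by
      ext t; simp [t.isLt]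
    rw [this, Set.image_univ]
  have := (Submodule.mem_inf.mp hpW).1
  rw [Submodule.restrictScalars_mem, hJN] at this
  exact this

lemma snoc_list {α : Type*} {n : ℕ} (f : Fin n → α) (x : α) :
    List.ofFn f ++ [x] = List.ofFn (Fin.snoc f x) := by
  rw [List.ofFn_succ' (Fin.snoc f x)]
  simp [Fin.snoc_castSucc, Fin.snoc_last, List.concat_eq_append]

lemma range_snoc {α : Type*} {n : ℕ} (f : Fin n → α) (x : α) :
    Set.range (Fin.snoc f x : Fin (n + 1) → α) = Set.range f ∪ {x} := by
  ext y
  constructor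
  · rintro ⟨i, rfl⟩
    refine Fin.lastCases ?_ ?_ i
    · right; rw [Fin.snoc_last]; rfl
    · intro j; left; exact ⟨j, by simp⟩
  · rintro (⟨j, rfl⟩ | hy)
    · exact ⟨j.castSucc, by simp⟩
    · exact ⟨Fin.last n, by rw [Fin.snoc_last]; exact hy.symm⟩

lemma reg_extract {R : Type*} [CommRing R] [Nontrivial R] {N : ℕ} (G : Fin N → R)
    (h : RingTheory.Sequence.IsRegular R (List.ofFn G)) (i : Fin N) :
    (∀ x : R, G i * x ∈ Ideal.span (G '' {t : Fin N | (t : ℕ) < (i : ℕ)}) →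
      x ∈ Ideal.span (G '' {t : Fin N | (t : ℕ) < (i : ℕ)})) ∧ G i ≠ 0 := by
  have hlen : (List.ofFn G).length = N := List.length_ofFn
  have hi : (i : ℕ) < (List.ofFn G).length := by rw [hlen]; exact i.isLt
  have hw := h.toIsWeaklyRegular.regular_mod_prev (i : ℕ) hi
  have hgetel : (List.ofFn G)[(i : ℕ)] = G i := by
    rw [List.getElem_ofFn]
  have htake : Ideal.ofList ((List.ofFn G).take (i : ℕ))
      = Ideal.span (G '' {t : Fin N | (t : ℕ) < (i : ℕ)}) := by
    show Ideal.span {r | r ∈ (List.ofFn G).take (i : ℕ)} = _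
    congr 1
    ext x
    simp only [Set.mem_setOf_eq, Set.mem_image]
    rw [List.mem_iff_getElem]
    constructor
    · rintro ⟨j, hj, rfl⟩
      have hj1 : j < (i : ℕ) := by
        have := hj
        rw [List.length_take, hlen] at this
        omega
      have hj2 : j < N := by omega
      refine ⟨⟨j, hj2⟩, hj1, ?_⟩
      rw [List.getElem_take, List.getElem_ofFn]
    · rintro ⟨t, ht, rfl⟩
      have h1 : (t : ℕ) < ((List.ofFn G).take (i : ℕ)).length := by
        rw [List.length_take, hlen]
        have h2 := t.isLt
        have ht' : (t : ℕ) < (i : ℕ) := ht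
        omega
      refine ⟨(t : ℕ), h1, ?_⟩
      rw [List.getElem_take, List.getElem_ofFn]
  have hsmul : ∀ l : List R, (Ideal.ofList l • ⊤ : Submodule R R) = Ideal.ofList l := by
    intro l
    show Ideal.span _ • ⊤ = _
    rw [Submodule.span_smul_eq, Submodule.set_smul_top_eq_span]
  rw [hsmul, htake, hgetel] at hw
  have hprop : ∀ x : R, G i * x ∈ Ideal.span (G '' {t : Fin N | (t : ℕ) < (i : ℕ)}) →
      x ∈ Ideal.span (G '' {t : Fin N | (t : ℕ) < (i : ℕ)}) := by
    intro x hx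
    have h1 : (Submodule.Quotient.mk (G i * x) :
        R ⧸ (Ideal.span (G '' {t : Fin N | (t : ℕ) < (i : ℕ)}) : Submodule R R)) = 0 :=
      (Submodule.Quotient.mk_eq_zero _).mpr hx
    have h2 : G i • (Submodule.Quotient.mk x :
        R ⧸ (Ideal.span (G '' {t : Fin N | (t : ℕ) < (i : ℕ)}) : Submodule R R))
        = G i • (0 : R ⧸ (Ideal.span (G '' {t : Fin N | (t : ℕ) < (i : ℕ)})
          : Submodule R R)) := by
      rw [smul_zero, ← Submodule.Quotient.mk_smul, smul_eq_mul]
      exact h1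
    exact (Submodule.Quotient.mk_eq_zero _).mp (hw h2)
  refine ⟨hprop, ?_⟩
  intro h0
  have hne : Ideal.span (G '' {t : Fin N | (t : ℕ) < (i : ℕ)}) ≠ ⊤ := by
    intro heq
    have htop := h.top_ne_smul
    rw [hsmul] at htop
    apply htop
    have hle : Ideal.span (G '' {t : Fin N | (t : ℕ) < (i : ℕ)}) ≤ Ideal.ofList (List.ofFn G) := by
      apply Ideal.span_le.mpr
      rintro x ⟨t, _, rfl⟩
      apply Ideal.subset_span
      show G t ∈ List.ofFn G
      rw [List.mem_ofFn]
      exact ⟨t, rfl⟩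
    have : Ideal.ofList (List.ofFn G) = ⊤ := top_le_iff.mp (heq ▸ hle)
    rw [this]
  apply hne
  rw [Ideal.eq_top_iff_one]
  apply hprop
  rw [h0, zero_mul]
  exact Ideal.zero_mem _

end LFFM

/-- Let `S = k[x₁,…,x_{n+1}]` over an infinite field, let
`f₁,…,fₙ` be a homogeneous regular sequence of degrees `d₁ ≤ ⋯ ≤ dₙ`, let `ℓ`
be a (general) linear form so that `f₁,…,fₙ,ℓ` is a regular sequence, and let
`f_{n+1}` be a form of degree `D > Σⱼ(dⱼ-1)` such that `f₁,…,fₙ,f_{n+1}` is a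
regular sequence. Then `f_{n+1} ∈ (f₁,…,fₙ,ℓ)`; consequently there are a form
`g` of degree `D-1` and a form `f'` of degree `D` with `f' ≡ ℓ·g` modulo
`(f₁,…,fₙ)` such that `f₁,…,fₙ,f'` is a regular sequence and
`(f₁,…,fₙ,f') = (f₁,…,fₙ,f_{n+1})`. -/
theorem last_form_factors_modulo
    {k : Type*} [Field k] [Infinite k] {n : ℕ}
    (f : Fin n → MvPolynomial (Fin (n + 1)) k) (d : Fin n → ℕ)
    (hhom : ∀ i, MvPolynomial.IsHomogeneous (f i) (d i)) (hmono : Monotone d)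
    (ℓ : MvPolynomial (Fin (n + 1)) k) (hℓ : MvPolynomial.IsHomogeneous ℓ 1)
    (hregℓ : RingTheory.Sequence.IsRegular (MvPolynomial (Fin (n + 1)) k)
      (List.ofFn f ++ [ℓ]))
    (fn : MvPolynomial (Fin (n + 1)) k) (D : ℕ)
    (hfn : MvPolynomial.IsHomogeneous fn D)
    (hD : (∑ j, (d j - 1)) < D)
    (hregfn : RingTheory.Sequence.IsRegular (MvPolynomial (Fin (n + 1)) k)
      (List.ofFn f ++ [fn])) :
    fn ∈ Ideal.span (Set.range f) ⊔ Ideal.span {ℓ} ∧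
    ∃ (g f' : MvPolynomial (Fin (n + 1)) k),
      MvPolynomial.IsHomogeneous g (D - 1) ∧
      MvPolynomial.IsHomogeneous f' D ∧
      f' - ℓ * g ∈ Ideal.span (Set.range f) ∧
      RingTheory.Sequence.IsRegular (MvPolynomial (Fin (n + 1)) k)
        (List.ofFn f ++ [f']) ∧
      Ideal.span (Set.range f) ⊔ Ideal.span {f'} =
        Ideal.span (Set.range f) ⊔ Ideal.span {fn} := by
  set G : Fin (n + 1) → MvPolynomial (Fin (n + 1)) k := Fin.snoc f ℓ with hG
  set E : Fin (n + 1) → ℕ := Fin.snoc d 1 with hE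
  have hGhom : ∀ i, MvPolynomial.IsHomogeneous (G i) (E i) := by
    intro i
    refine Fin.lastCases ?_ ?_ i
    · rw [hG, hE]; simp only [Fin.snoc_last]; exact hℓ
    · intro j; rw [hG, hE]; simp only [Fin.snoc_castSucc]; exact hhom j
  have hregG : RingTheory.Sequence.IsRegular (MvPolynomial (Fin (n + 1)) k)
      (List.ofFn G) := by
    rw [hG, ← LFFM.snoc_list]
    exact hregℓ
  have hext := fun i => LFFM.reg_extract G hregG i
  have hsum : ∑ t, (E t - 1) = ∑ j, (d j - 1) := by
    rw [Fin.sum_univ_castSucc, hE]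
    simp only [Fin.snoc_castSucc, Fin.snoc_last]
    omega
  have h1 : fn ∈ Ideal.span (Set.range G) :=
    LFFM.high_degree_mem G E hGhom (fun i => (hext i).2) (fun i => (hext i).1)
      hfn (by rw [hsum]; exact hD)
  have hrange : Ideal.span (Set.range G)
      = Ideal.span (Set.range f) ⊔ Ideal.span {ℓ} := by
    rw [hG, LFFM.range_snoc, Ideal.span_union]
  have first : fn ∈ Ideal.span (Set.range f) ⊔ Ideal.span {ℓ} := by
    rw [← hrange]; exact h1
  refine ⟨first, ?_⟩
  obtain ⟨a, ha, b, hb, hab⟩ := Submodule.mem_sup.mp first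
  obtain ⟨c, rfl⟩ := Ideal.mem_span_singleton.mp hb
  have hD1 : 1 ≤ D := by omega
  refine ⟨homogeneousComponent (D - 1) c, fn,
    homogeneousComponent_isHomogeneous (D - 1) c, hfn, ?_, hregfn, rfl⟩
  have hfnc : homogeneousComponent D fn = fn := by
    rw [homogeneousComponent_of_mem ((mem_homogeneousSubmodule _ _).mpr hfn), if_pos rfl]
  have hdecomp : fn = homogeneousComponent D a + ℓ * homogeneousComponent (D - 1) c := by
    rw [← hfnc, ← hab, map_add, LFFM.comp_mul_of_le hℓ c hD1]
  have hsub : fn - ℓ * homogeneousComponent (D - 1) c = homogeneousComponent D a := by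
    rw [hdecomp]; ring
  rw [hsub]
  exact LFFM.comp_mem_span (fun s hs => by
    obtain ⟨i, rfl⟩ := hs; exact ⟨d i, hhom i⟩) ha D
end
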